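/- arXiv:1804.05783 — 6 statements merged into one kernel-verified Lean document; each statement's English description precedes it below -/
import Mathlib

section
/- Uniform consistency of the local constant boundary estimator (random design): under assumptions (A1)–(A4), the estimator h̃₀ satisfies ‖h̃₀ − h₀‖_∞ = sup_{x∈[0,1]} |h̃₀(x) − h₀(x)| = o_P(1), i.e. for every δ > 0, P(sup_{x∈[0,1]} |h̃₀(x) − h₀(x)| > δ) → 0 as n → ∞. -/
open MeasureTheory ProbabilityTheory Filter Topology
open scoped ENNReal

lemma pair_iIndepFun {Ω : Type} [MeasureSpace Ω] [IsProbabilityMeasure (ℙ : Measure Ω)]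
    (X ε : ℕ → Ω → ℝ)
    (hεmeas : ∀ i, Measurable (ε i))
    (hεiid : iIndepFun ε ℙ)
    (hindepεX : IndepFun (fun ω i => ε i ω) (fun ω i => X i ω) ℙ)
    (hXmeas : ∀ i, Measurable (X i))
    (hXiid : iIndepFun X ℙ) :
    iIndepFun
      (fun i ω => (X i ω, ε i ω)) ℙ := by
  rw [iIndepFun_iff_iIndep]
  set π : ℕ → Set (Set Ω) := fun i =>
    {s | ∃ A B : Set ℝ, MeasurableSet A ∧ MeasurableSet B ∧ s = X i ⁻¹' A ∩ ε i ⁻¹' B} with hπ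
  have h_le : ∀ i, MeasurableSpace.comap (fun ω => (X i ω, ε i ω))
      (inferInstance : MeasurableSpace (ℝ × ℝ)) ≤ (inferInstance : MeasurableSpace Ω) := by
    intro i
    exact ((hXmeas i).prodMk (hεmeas i)).comap_le
  refine iIndepSets.iIndep h_le π ?_ ?_ ?_
  · -- pi system
    rintro i s ⟨A, B, hA, hB, rfl⟩ t ⟨A', B', hA', hB', rfl⟩ -
    refine ⟨A ∩ A', B ∩ B', hA.inter hA', hB.inter hB', ?_⟩
    ext ω; simp [Set.mem_inter_iff]; tauto
  · -- generateFrom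
    intro i
    rw [← generateFrom_prod, MeasurableSpace.comap_generateFrom]
    congr 1
    ext s
    constructor
    · rintro ⟨u, ⟨A, hA, B, hB, rfl⟩, rfl⟩
      exact ⟨A, B, hA, hB, (Set.mk_preimage_prod _ _).symm ▸ rfl⟩
    · rintro ⟨A, B, hA, hB, rfl⟩
      exact ⟨A ×ˢ B, ⟨A, hA, B, hB, rfl⟩, by rw [Set.mk_preimage_prod]⟩
  · -- iIndepSets
    rw [iIndepSets_iff]
    intro S f hf
    choose A B hA hB hfeq using hf
    classical
    set A' : ℕ → Set ℝ := fun i => if h : i ∈ S then A i h else Set.univ with hA'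
    set B' : ℕ → Set ℝ := fun i => if h : i ∈ S then B i h else Set.univ with hB'
    have hA'm : ∀ i, MeasurableSet (A' i) := by
      intro i; by_cases h : i ∈ S <;> simp [hA', h, hA]
    have hB'm : ∀ i, MeasurableSet (B' i) := by
      intro i; by_cases h : i ∈ S <;> simp [hB', h, hB]
    have hfeq' : ∀ i ∈ S, f i = X i ⁻¹' A' i ∩ ε i ⁻¹' B' i := by
      intro i hi; simp only [hA', hB', dif_pos hi]; exact hfeq i hi
    have hsplit : (⋂ i ∈ S, f i)
        = (⋂ i ∈ S, X i ⁻¹' A' i) ∩ (⋂ i ∈ S, ε i ⁻¹' B' i) := by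
      ext ω
      simp only [Set.mem_iInter, Set.mem_inter_iff]
      constructor
      · intro h
        refine ⟨fun i hi => ?_, fun i hi => ?_⟩
        · have := h i hi; rw [hfeq' i hi] at this; exact this.1
        · have := h i hi; rw [hfeq' i hi] at this; exact this.2
      · intro h i hi
        rw [hfeq' i hi]; exact ⟨h.1 i hi, h.2 i hi⟩
    have hXset : (⋂ i ∈ S, X i ⁻¹' A' i)
        = (fun ω i => X i ω) ⁻¹' (⋂ i ∈ S, (fun x : ℕ → ℝ => x i) ⁻¹' A' i) := by
      simp only [Set.preimage_iInter]; rfl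
    have hεset : (⋂ i ∈ S, ε i ⁻¹' B' i)
        = (fun ω i => ε i ω) ⁻¹' (⋂ i ∈ S, (fun x : ℕ → ℝ => x i) ⁻¹' B' i) := by
      simp only [Set.preimage_iInter]; rfl
    have hXmeas' : MeasurableSet (⋂ i ∈ S, (fun x : ℕ → ℝ => x i) ⁻¹' A' i) :=
      Set.Finite.measurableSet_biInter S.finite_toSet
        (fun i _ => measurable_pi_apply i (hA'm i))
    have hεmeas' : MeasurableSet (⋂ i ∈ S, (fun x : ℕ → ℝ => x i) ⁻¹' B' i) :=
      Set.Finite.measurableSet_biInter S.finite_toSet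
        (fun i _ => measurable_pi_apply i (hB'm i))
    have hcross := hindepεX.measure_inter_preimage_eq_mul _ _ hεmeas' hXmeas'
    have hXprod : ℙ (⋂ i ∈ S, X i ⁻¹' A' i) = ∏ i ∈ S, ℙ (X i ⁻¹' A' i) :=
      hXiid.meas_biInter (fun i _ => ⟨A' i, hA'm i, rfl⟩)
    have hεprod : ℙ (⋂ i ∈ S, ε i ⁻¹' B' i) = ∏ i ∈ S, ℙ (ε i ⁻¹' B' i) :=
      hεiid.meas_biInter (fun i _ => ⟨B' i, hB'm i, rfl⟩)
    have hper : ∀ i ∈ S, ℙ (f i) = ℙ (X i ⁻¹' A' i) * ℙ (ε i ⁻¹' B' i) := by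
      intro i hi
      have hIF : IndepFun (ε i) (X i) ℙ :=
        hindepεX.comp (measurable_pi_apply i) (measurable_pi_apply i)
      rw [hfeq' i hi, Set.inter_comm,
        hIF.measure_inter_preimage_eq_mul _ _ (hB'm i) (hA'm i), mul_comm]
    calc ℙ (⋂ i ∈ S, f i)
        = ℙ (⋂ i ∈ S, X i ⁻¹' A' i) * ℙ (⋂ i ∈ S, ε i ⁻¹' B' i) := by
          rw [hsplit, hXset, hεset, Set.inter_comm, hcross, mul_comm, ← hXset, ← hεset]
      _ = (∏ i ∈ S, ℙ (X i ⁻¹' A' i)) * ∏ i ∈ S, ℙ (ε i ⁻¹' B' i) := by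
          rw [hXprod, hεprod]
      _ = ∏ i ∈ S, ℙ (X i ⁻¹' A' i) * ℙ (ε i ⁻¹' B' i) := by
          rw [Finset.prod_mul_distrib]
      _ = ∏ i ∈ S, ℙ (f i) := by
          exact (Finset.prod_congr rfl hper).symm



set_option maxHeartbeats 2000000 in
/-- **Uniform consistency of the local constant boundary estimator (random design).**
Under assumptions (A1)–(A4), the estimator
`h̃₀(x) = max{Λ₀(Y_i) : i ≤ n, |X_i − x| ≤ b_n}` (computed in the extended reals, so
that `max ∅ = ⊥`) satisfies `sup_{x ∈ [0,1]} |h̃₀(x) − h₀(x)| = o_P(1)`:  for every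
`δ > 0`, `P(sup_{x ∈ [0,1]} |h̃₀(x) − h₀(x)| > δ) → 0` as `n → ∞`.  (Here
`|A − B|` is expressed in `EReal` as `max (A − B) (B − A)`.) -/
theorem boundary_estimator_uniform_consistency_random_design
    {Ω : Type} [MeasureSpace Ω] [IsProbabilityMeasure (ℙ : Measure Ω)]
    (X Y ε : ℕ → Ω → ℝ) (Λ₀ h₀ F₀ fX : ℝ → ℝ) (b : ℕ → ℝ)
    -- Λ₀ is strictly increasing and continuous
    (hΛ₀mono : StrictMono Λ₀) (hΛ₀cont : Continuous Λ₀)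
    -- (A1): model with i.i.d. errors, F₀(0) = 1, F₀(−Δ) < 1 for Δ > 0,
    -- errors independent of covariates
    (hmodel : ∀ i ω, Λ₀ (Y i ω) = h₀ (X i ω) + ε i ω)
    (hεmeas : ∀ i, Measurable (ε i))
    (hεiid : iIndepFun ε ℙ)
    (hεid : ∀ i, IdentDistrib (ε i) (ε 0) ℙ ℙ)
    (hF₀ : ∀ t, F₀ t = (ℙ {ω | ε 0 ω ≤ t}).toReal)
    (hF₀zero : F₀ 0 = 1)
    (hF₀lt : ∀ d : ℝ, 0 < d → F₀ (-d) < 1)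
    (hindepεX : IndepFun (fun ω i => ε i ω) (fun ω i => X i ω) ℙ)
    -- (A2): covariates i.i.d. with density f_X continuous and bounded away
    -- from zero on its support [0,1]
    (hXmeas : ∀ i, Measurable (X i))
    (hXiid : iIndepFun X ℙ)
    (hXlaw : ∀ i, Measure.map (X i) ℙ =
      (volume.restrict (Set.Icc (0 : ℝ) 1)).withDensity (fun t => ENNReal.ofReal (fX t)))
    (hfXcont : ContinuousOn fX (Set.Icc 0 1))
    (hfXpos : ∃ c > (0 : ℝ), ∀ t ∈ Set.Icc (0 : ℝ) 1, c ≤ fX t)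
    -- (A3): h₀ continuous on [0,1]
    (hh₀ : ContinuousOn h₀ (Set.Icc 0 1))
    -- (A4): b_n > 0, b_n → 0, (log n)/(n b_n) → 0
    (hbpos : ∀ n, 0 < b n) (hb0 : Tendsto b atTop (𝓝 0))
    (hblog : Tendsto (fun n : ℕ => Real.log n / (n * b n)) atTop (𝓝 0)) :
    ∀ δ : ℝ, 0 < δ →
      Tendsto
        (fun n : ℕ => ℙ {ω : Ω |
          (δ : EReal) < ⨆ t : Set.Icc (0 : ℝ) 1,
            max
              ((⨆ i : {i : ℕ // i < n ∧ |X i ω - (t : ℝ)| ≤ b n},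
                  ((Λ₀ (Y (i : ℕ) ω) : ℝ) : EReal)) - ((h₀ t : ℝ) : EReal))
              (((h₀ t : ℝ) : EReal) -
                ⨆ i : {i : ℕ // i < n ∧ |X i ω - (t : ℝ)| ≤ b n},
                  ((Λ₀ (Y (i : ℕ) ω) : ℝ) : EReal))})
        atTop (𝓝 0) := by
  intro δ hδ
  classical
  obtain ⟨c, hc, hcfX⟩ := hfXpos
  set d : ℝ := δ / 4 with hd_def
  have hd : 0 < d := by positivity
  set p : ℝ := 1 - F₀ (-d) with hp_def
  have hp : 0 < p := by have := hF₀lt d hd; linarith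
  have hF₀nonneg : 0 ≤ F₀ (-d) := by rw [hF₀]; exact ENNReal.toReal_nonneg
  have hp1 : p ≤ 1 := by linarith
  -- modulus of continuity
  obtain ⟨r, hr, hmod⟩ : ∃ r > 0, ∀ x ∈ Set.Icc (0:ℝ) 1, ∀ y ∈ Set.Icc (0:ℝ) 1,
      |x - y| < r → |h₀ x - h₀ y| < δ / 4 := by
    have := (Metric.uniformContinuousOn_iff).1
      (isCompact_Icc.uniformContinuousOn_of_continuous hh₀) (δ/4) (by positivity)
    obtain ⟨r, hr, H⟩ := this
    exact ⟨r, hr, fun x hx y hy hxy => by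
      simpa [Real.dist_eq] using H x hx y hy (by simpa [Real.dist_eq] using hxy)⟩
  -- pair independence
  have hpair : iIndepFun
      (fun i ω => (X i ω, ε i ω)) ℙ :=
    pair_iIndepFun X ε hεmeas hεiid hindepεX hXmeas hXiid
  -- basic measure facts on ε
  have hIic : ∀ t : ℝ, ℙ (ε 0 ⁻¹' Set.Iic t) = ENNReal.ofReal (F₀ t) := by
    intro t
    have : ε 0 ⁻¹' Set.Iic t = {ω | ε 0 ω ≤ t} := rfl
    rw [this, hF₀, ENNReal.ofReal_toReal (measure_ne_top _ _)]
  have hIoi : ∀ i, ℙ (ε i ⁻¹' Set.Ioi (-d)) = ENNReal.ofReal p := by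
    intro i
    have h1 : ℙ (ε i ⁻¹' Set.Ioi (-d)) = ℙ (ε 0 ⁻¹' Set.Ioi (-d)) :=
      (hεid i).measure_mem_eq measurableSet_Ioi
    have h2 : ε 0 ⁻¹' Set.Ioi (-d) = (ε 0 ⁻¹' Set.Iic (-d))ᶜ := by
      rw [← Set.preimage_compl, Set.compl_Iic]
    rw [h1, h2, prob_compl_eq_one_sub ((hεmeas 0) measurableSet_Iic), hIic,
      hp_def, ENNReal.ofReal_sub _ hF₀nonneg, ENNReal.ofReal_one]
  have hεpos : ∀ i, ℙ (ε i ⁻¹' Set.Ioi 0) = 0 := by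
    intro i
    have h1 : ℙ (ε i ⁻¹' Set.Ioi 0) = ℙ (ε 0 ⁻¹' Set.Ioi 0) :=
      (hεid i).measure_mem_eq measurableSet_Ioi
    have h2 : ε 0 ⁻¹' Set.Ioi 0 = (ε 0 ⁻¹' Set.Iic 0)ᶜ := by
      rw [← Set.preimage_compl, Set.compl_Iic]
    have h3 : ℙ (ε 0 ⁻¹' Set.Iic 0) = 1 := by
      have := hF₀ 0
      rw [hF₀zero] at this
      exact ((ENNReal.toReal_eq_one_iff _).1 this.symm)
    rw [h1, h2, prob_compl_eq_one_sub ((hεmeas 0) measurableSet_Iic), h3, tsub_self]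
  -- X outside [0,1] has probability 0
  have hXout : ∀ i, ℙ (X i ⁻¹' (Set.Icc (0:ℝ) 1)ᶜ) = 0 := by
    intro i
    rw [← Measure.map_apply (hXmeas i) measurableSet_Icc.compl, hXlaw i,
      withDensity_apply _ measurableSet_Icc.compl,
      Measure.restrict_restrict measurableSet_Icc.compl,
      Set.compl_inter_self, Measure.restrict_empty, lintegral_zero_measure]
  -- X in a subinterval of [0,1]
  have hXJ : ∀ i (a a' : ℝ), a ≤ a' → Set.Icc a a' ⊆ Set.Icc 0 1 →
      ENNReal.ofReal (c * (a' - a)) ≤ ℙ (X i ⁻¹' Set.Icc a a') := by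
    intro i a a' haa hsub
    rw [← Measure.map_apply (hXmeas i) measurableSet_Icc, hXlaw i,
      withDensity_apply _ measurableSet_Icc,
      Measure.restrict_restrict measurableSet_Icc,
      Set.inter_eq_left.2 hsub]
    calc ENNReal.ofReal (c * (a' - a))
        = ENNReal.ofReal c * volume (Set.Icc a a') := by
          rw [Real.volume_Icc, ENNReal.ofReal_mul hc.le]
      _ = ∫⁻ _ in Set.Icc a a', ENNReal.ofReal c := (setLIntegral_const _ _).symm
      _ ≤ ∫⁻ x in Set.Icc a a', ENNReal.ofReal (fX x) := by
          refine setLIntegral_mono' measurableSet_Icc (fun x hx => ?_)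
          exact ENNReal.ofReal_le_ofReal (hcfX x (hsub hx))
  -- grid definitions
  set K : ℕ → ℕ := fun n => ⌈2 / b n⌉₊ with hK_def
  have hKge : ∀ n, 2 / b n ≤ (K n : ℝ) := fun n => Nat.le_ceil _
  have hK1 : ∀ n, 1 ≤ K n := by
    intro n
    exact Nat.one_le_ceil_iff.2 (div_pos two_pos (hbpos n))
  have hKpos : ∀ n, (0:ℝ) < (K n : ℝ) := by
    intro n; exact_mod_cast Nat.lt_of_lt_of_le Nat.zero_lt_one (hK1 n)
  set J : ℕ → ℕ → Set ℝ := fun n k => Set.Icc ((k:ℝ)/(K n)) (((k:ℝ)+1)/(K n)) with hJ_def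
  have hJsub : ∀ n k, k < K n → J n k ⊆ Set.Icc 0 1 := by
    intro n k hk x hx
    have h1 : (0:ℝ) ≤ (k:ℝ)/(K n) := by positivity
    have h2 : ((k:ℝ)+1)/(K n) ≤ 1 := by
      rw [div_le_one (hKpos n)]
      exact_mod_cast Nat.succ_le_of_lt hk
    exact ⟨le_trans h1 hx.1, le_trans hx.2 h2⟩
  set C : ℕ → ℕ → ℕ → Set Ω :=
    fun n k i => (fun ω => (X i ω, ε i ω)) ⁻¹' ((J n k) ×ˢ Set.Ioi (-d))ᶜ with hC_def
  have hTmeas : ∀ n k, MeasurableSet ((J n k) ×ˢ Set.Ioi (-d)) :=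
    fun n k => measurableSet_Icc.prod measurableSet_Ioi
  set Bad : ℕ → Set Ω := fun n =>
    ((⋃ i ∈ Finset.range n, ε i ⁻¹' Set.Ioi 0) ∪
      (⋃ i ∈ Finset.range n, X i ⁻¹' (Set.Icc (0:ℝ) 1)ᶜ)) ∪
    ⋃ k ∈ Finset.range (K n), ⋂ i ∈ Finset.range n, C n k i with hBad_def
  -- probability of one bad cell
  have hCprob : ∀ n k i, k < K n →
      ℙ (C n k i) ≤ ENNReal.ofReal (Real.exp (-(c * p / (K n)))) := by
    intro n k i hk
    have hpre : (fun ω => (X i ω, ε i ω)) ⁻¹' ((J n k) ×ˢ Set.Ioi (-d))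
        = X i ⁻¹' (J n k) ∩ ε i ⁻¹' Set.Ioi (-d) := Set.mk_preimage_prod _ _
    have hIF : IndepFun (ε i) (X i) ℙ :=
      hindepεX.comp (measurable_pi_apply i) (measurable_pi_apply i)
    have hq : ENNReal.ofReal (c * p / K n)
        ≤ ℙ ((fun ω => (X i ω, ε i ω)) ⁻¹' ((J n k) ×ˢ Set.Ioi (-d))) := by
      rw [hpre, Set.inter_comm,
        hIF.measure_inter_preimage_eq_mul _ _ measurableSet_Ioi measurableSet_Icc,
        hIoi i]
      have hlen : ((k:ℝ)+1)/(K n) - (k:ℝ)/(K n) = 1 / (K n) := by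
        rw [div_sub_div_same]; congr 1; ring
      have hXJk : ENNReal.ofReal (c * (1 / K n)) ≤ ℙ (X i ⁻¹' (J n k)) := by
        have := hXJ i ((k:ℝ)/(K n)) (((k:ℝ)+1)/(K n))
          (by rw [div_le_div_iff_of_pos_right (hKpos n)]; linarith) (hJsub n k hk)
        rwa [hlen] at this
      calc ENNReal.ofReal (c * p / K n)
          = ENNReal.ofReal p * ENNReal.ofReal (c * (1 / K n)) := by
            rw [← ENNReal.ofReal_mul hp.le]; ring_nf
        _ ≤ ENNReal.ofReal p * ℙ (X i ⁻¹' (J n k)) := by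
            exact mul_le_mul_right hXJk _
    have hCeq : C n k i
        = ((fun ω => (X i ω, ε i ω)) ⁻¹' ((J n k) ×ˢ Set.Ioi (-d)))ᶜ := by
      rfl
    have hmeaspre : MeasurableSet ((fun ω => (X i ω, ε i ω)) ⁻¹' ((J n k) ×ˢ Set.Ioi (-d))) :=
      ((hXmeas i).prodMk (hεmeas i)) (hTmeas n k)
    rw [hCeq, prob_compl_eq_one_sub hmeaspre]
    calc 1 - ℙ ((fun ω => (X i ω, ε i ω)) ⁻¹' ((J n k) ×ˢ Set.Ioi (-d)))
        ≤ 1 - ENNReal.ofReal (c * p / K n) := tsub_le_tsub_left hq _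
      _ = ENNReal.ofReal (1 - c * p / K n) := by
          rw [ENNReal.ofReal_sub _ (le_of_lt (div_pos (mul_pos hc hp) (hKpos n))),
            ENNReal.ofReal_one]
      _ ≤ ENNReal.ofReal (Real.exp (-(c * p / K n))) := by
          apply ENNReal.ofReal_le_ofReal
          have := Real.add_one_le_exp (-(c * p / K n))
          linarith
  have hInter : ∀ n k, k < K n →
      ℙ (⋂ i ∈ Finset.range n, C n k i)
        ≤ ENNReal.ofReal (Real.exp (-(c * p / (K n)) * n)) := by
    intro n k hk
    have := hpair.meas_biInter (S := Finset.range n) (s := fun i => C n k i)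
      (fun i _ => ⟨((J n k) ×ˢ Set.Ioi (-d))ᶜ, (hTmeas n k).compl, rfl⟩)
    rw [this]
    calc ∏ i ∈ Finset.range n, ℙ (C n k i)
        ≤ ∏ _i ∈ Finset.range n, ENNReal.ofReal (Real.exp (-(c * p / (K n)))) :=
          Finset.prod_le_prod' (fun i _ => hCprob n k i hk)
      _ = ENNReal.ofReal (Real.exp (-(c * p / (K n)))) ^ n := by
          rw [Finset.prod_const, Finset.card_range]
      _ = ENNReal.ofReal (Real.exp (-(c * p / (K n))) ^ n) :=
          (ENNReal.ofReal_pow (Real.exp_nonneg _) n).symm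
      _ = ENNReal.ofReal (Real.exp (-(c * p / (K n)) * n)) := by
          rw [← Real.exp_nat_mul]; congr 1; ring
  have hBadBound : ∀ n, ℙ (Bad n)
      ≤ (K n : ℝ≥0∞) * ENNReal.ofReal (Real.exp (-(c * p / (K n)) * n)) := by
    intro n
    have h1 : ℙ (⋃ i ∈ Finset.range n, ε i ⁻¹' Set.Ioi 0) = 0 := by
      refine le_antisymm (le_trans (measure_biUnion_finset_le _ _) ?_) zero_le
      exact le_of_eq (Finset.sum_eq_zero (fun i _ => hεpos i))
    have h2 : ℙ (⋃ i ∈ Finset.range n, X i ⁻¹' (Set.Icc (0:ℝ) 1)ᶜ) = 0 := by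
      refine le_antisymm (le_trans (measure_biUnion_finset_le _ _) ?_) zero_le
      exact le_of_eq (Finset.sum_eq_zero (fun i _ => hXout i))
    have h3 : ℙ (⋃ k ∈ Finset.range (K n), ⋂ i ∈ Finset.range n, C n k i)
        ≤ (K n : ℝ≥0∞) * ENNReal.ofReal (Real.exp (-(c * p / (K n)) * n)) := by
      refine le_trans (measure_biUnion_finset_le _ _) ?_
      calc ∑ k ∈ Finset.range (K n), ℙ (⋂ i ∈ Finset.range n, C n k i)
          ≤ ∑ _k ∈ Finset.range (K n),
              ENNReal.ofReal (Real.exp (-(c * p / (K n)) * n)) :=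
            Finset.sum_le_sum (fun k hk => hInter n k (Finset.mem_range.1 hk))
        _ = (K n : ℝ≥0∞) * ENNReal.ofReal (Real.exp (-(c * p / (K n)) * n)) := by
            rw [Finset.sum_const, Finset.card_range, nsmul_eq_mul]
    calc ℙ (Bad n) ≤ ℙ ((⋃ i ∈ Finset.range n, ε i ⁻¹' Set.Ioi 0) ∪
          (⋃ i ∈ Finset.range n, X i ⁻¹' (Set.Icc (0:ℝ) 1)ᶜ))
          + ℙ (⋃ k ∈ Finset.range (K n), ⋂ i ∈ Finset.range n, C n k i) :=
        measure_union_le _ _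
      _ ≤ (ℙ (⋃ i ∈ Finset.range n, ε i ⁻¹' Set.Ioi 0)
            + ℙ (⋃ i ∈ Finset.range n, X i ⁻¹' (Set.Icc (0:ℝ) 1)ᶜ))
          + ℙ (⋃ k ∈ Finset.range (K n), ⋂ i ∈ Finset.range n, C n k i) :=
        add_le_add_left (measure_union_le _ _) _
      _ ≤ (K n : ℝ≥0∞) * ENNReal.ofReal (Real.exp (-(c * p / (K n)) * n)) := by
          rw [h1, h2]; simpa using h3
  -- deterministic inclusion: outside Bad n, the sup is at most δ
  have key : ∀ (n : ℕ), b n < r → b n ≤ 1 → ∀ ω : Ω, ω ∉ Bad n →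
      (⨆ t : Set.Icc (0 : ℝ) 1,
        max
          ((⨆ i : {i : ℕ // i < n ∧ |X i ω - (t : ℝ)| ≤ b n},
              ((Λ₀ (Y (i : ℕ) ω) : ℝ) : EReal)) - ((h₀ t : ℝ) : EReal))
          (((h₀ t : ℝ) : EReal) -
            ⨆ i : {i : ℕ // i < n ∧ |X i ω - (t : ℝ)| ≤ b n},
              ((Λ₀ (Y (i : ℕ) ω) : ℝ) : EReal))) ≤ ((δ : ℝ) : EReal) := by
    intro n hbr hb1 ω hω
    have hεle : ∀ i, i < n → ε i ω ≤ 0 := by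
      intro i hi
      by_contra hcon
      push_neg at hcon
      exact hω (Or.inl (Or.inl (Set.mem_biUnion (Finset.mem_range.2 hi) hcon)))
    have hXin : ∀ i, i < n → X i ω ∈ Set.Icc (0:ℝ) 1 := by
      intro i hi
      by_contra hcon
      exact hω (Or.inl (Or.inr (Set.mem_biUnion (Finset.mem_range.2 hi) hcon)))
    have hgood : ∀ k, k < K n → ∃ i, i < n ∧ X i ω ∈ J n k ∧ -d < ε i ω := by
      intro k hk
      by_contra hcon
      push_neg at hcon
      refine hω (Or.inr (Set.mem_biUnion (Finset.mem_range.2 hk) ?_))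
      rw [Set.mem_iInter₂]
      intro i hi
      rw [hC_def]
      intro hmem
      rw [Set.mem_prod] at hmem
      exact (hcon i (Finset.mem_range.1 hi) hmem.1).not_gt hmem.2
    have h1K : 1/(K n : ℝ) ≤ b n := by
      have h2b : 2 ≤ (K n : ℝ) * b n := by
        have := (div_le_iff₀ (hbpos n)).1 (hKge n)
        linarith
      rw [div_le_iff₀ (hKpos n)]
      nlinarith [hbpos n, hKpos n]
    refine iSup_le ?_
    rintro ⟨t, ht⟩
    -- find the grid cell containing t
    obtain ⟨k, hkK, hk1, hk2⟩ : ∃ k, k < K n ∧ (k:ℝ)/(K n) ≤ t ∧ t ≤ ((k:ℝ)+1)/(K n) := by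
      by_cases hcase : ⌊t * (K n : ℝ)⌋₊ ≤ K n - 1
      · refine ⟨⌊t * (K n : ℝ)⌋₊, ?_, ?_, ?_⟩
        · have := hK1 n; omega
        · rw [div_le_iff₀ (hKpos n)]
          exact Nat.floor_le (mul_nonneg ht.1 (hKpos n).le)
        · rw [le_div_iff₀ (hKpos n)]
          exact le_of_lt (Nat.lt_floor_add_one _)
      · refine ⟨K n - 1, by have := hK1 n; omega, ?_, ?_⟩
        · push_neg at hcase
          have hKle : (K n : ℝ) ≤ t * (K n : ℝ) := by
            have h1 : (K n : ℝ) ≤ (⌊t * (K n : ℝ)⌋₊ : ℝ) := by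
              exact_mod_cast Nat.le_of_pred_lt hcase
            exact le_trans h1 (Nat.floor_le (mul_nonneg ht.1 (hKpos n).le))
          have ht1 : (1:ℝ) ≤ t := by
            have := hKpos n
            nlinarith
          have : ((K n - 1 : ℕ) : ℝ) / (K n : ℝ) ≤ 1 := by
            rw [div_le_one (hKpos n)]
            exact_mod_cast Nat.sub_le _ _
          linarith
        · have hcast : ((K n - 1 : ℕ) : ℝ) + 1 = (K n : ℝ) := by
            have := hK1 n
            push_cast [Nat.cast_sub this]
            ring
          rw [hcast, div_self (ne_of_gt (hKpos n))]
          exact ht.2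
    have hwidth : ∀ x ∈ J n k, |x - t| ≤ b n := by
      intro x hx
      rw [hJ_def] at hx
      have hlen : ((k:ℝ)+1)/(K n) - (k:ℝ)/(K n) = 1 / (K n) := by
        rw [div_sub_div_same]; congr 1; ring
      have := hx.1
      have := hx.2
      rw [abs_le]
      constructor <;> nlinarith [h1K]
    obtain ⟨i0, hi0n, hi0J, hi0ε⟩ := hgood k hkK
    have hmodω : ∀ j, j < n → |X j ω - t| ≤ b n → |h₀ (X j ω) - h₀ t| < δ/4 := by
      intro j hj habs
      exact hmod _ (hXin j hj) _ ht (lt_of_le_of_lt habs hbr)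
    have hSub : (⨆ i : {i : ℕ // i < n ∧ |X i ω - t| ≤ b n},
        ((Λ₀ (Y (i : ℕ) ω) : ℝ) : EReal)) ≤ ((h₀ t + δ/4 : ℝ) : EReal) := by
      refine iSup_le ?_
      rintro ⟨j, hjn, hjb⟩
      rw [EReal.coe_le_coe_iff, hmodel j ω]
      have h1 := abs_lt.1 (hmodω j hjn hjb)
      have h2 := hεle j hjn
      linarith [h1.1, h1.2]
    have hSlb : ((h₀ t - δ/2 : ℝ) : EReal) ≤ ⨆ i : {i : ℕ // i < n ∧ |X i ω - t| ≤ b n},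
        ((Λ₀ (Y (i : ℕ) ω) : ℝ) : EReal) := by
      have hi0abs : |X i0 ω - t| ≤ b n := hwidth _ hi0J
      refine le_trans ?_
        (le_iSup (fun i : {i : ℕ // i < n ∧ |X i ω - t| ≤ b n} =>
          ((Λ₀ (Y (i : ℕ) ω) : ℝ) : EReal)) (⟨i0, hi0n, hi0abs⟩ : {i : ℕ // i < n ∧ |X i ω - t| ≤ b n}))
      rw [EReal.coe_le_coe_iff, hmodel i0 ω]
      have h1 := abs_lt.1 (hmodω i0 hi0n hi0abs)
      have : d = δ/4 := hd_def
      linarith [h1.1, h1.2]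
    refine le_trans (max_le ?_ ?_) (le_refl _)
    · calc (⨆ i : {i : ℕ // i < n ∧ |X i ω - t| ≤ b n},
            ((Λ₀ (Y (i : ℕ) ω) : ℝ) : EReal)) - ((h₀ t : ℝ) : EReal)
          ≤ ((h₀ t + δ/4 : ℝ) : EReal) - ((h₀ t : ℝ) : EReal) :=
            EReal.sub_le_sub hSub (le_refl _)
        _ ≤ ((δ : ℝ) : EReal) := by
            rw [← EReal.coe_sub]
            exact EReal.coe_le_coe_iff.2 (by linarith)
    · calc ((h₀ t : ℝ) : EReal) - (⨆ i : {i : ℕ // i < n ∧ |X i ω - t| ≤ b n},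
            ((Λ₀ (Y (i : ℕ) ω) : ℝ) : EReal))
          ≤ ((h₀ t : ℝ) : EReal) - ((h₀ t - δ/2 : ℝ) : EReal) :=
            EReal.sub_le_sub (le_refl _) hSlb
        _ ≤ ((δ : ℝ) : EReal) := by
            rw [← EReal.coe_sub]
            exact EReal.coe_le_coe_iff.2 (by linarith)
  -- the quantitative bound tends to zero
  set ε' : ℝ := c * p / 9 with hε'_def
  have hε'pos : 0 < ε' := by
    rw [hε'_def]; exact div_pos (mul_pos hc hp) (by norm_num)
  have hbound_ev : ∀ᶠ n : ℕ in atTop,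
      (K n : ℝ≥0∞) * ENNReal.ofReal (Real.exp (-(c * p / (K n)) * n))
        ≤ ENNReal.ofReal (3 * ε' / (n:ℝ)^2) := by
    have hev1 : ∀ᶠ n : ℕ in atTop, b n ≤ 1 := by
      filter_upwards [hb0.eventually (eventually_le_nhds (by norm_num : (0:ℝ) < 1))]
        with n h using h
    have hev2 : ∀ᶠ n : ℕ in atTop, Real.log n / (n * b n) ≤ ε' :=
      hblog.eventually (eventually_le_nhds hε'pos)
    filter_upwards [hev1, hev2, Filter.eventually_ge_atTop 3] with n hb1 hlog hn3
    have hn0 : (0:ℝ) < n := by exact_mod_cast Nat.lt_of_lt_of_le (by norm_num) hn3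
    have hn3' : (3:ℝ) ≤ n := by exact_mod_cast hn3
    have hL1 : 1 ≤ Real.log n := by
      rw [Real.le_log_iff_exp_le hn0]
      calc Real.exp 1 ≤ 2.7182818286 := Real.exp_one_lt_d9.le
        _ ≤ n := by linarith
    have hLpos : 0 < Real.log n := lt_of_lt_of_le one_pos hL1
    have hnbpos : 0 < (n:ℝ) * b n := mul_pos hn0 (hbpos n)
    have hLbound : Real.log n ≤ ε' * ((n:ℝ) * b n) := by
      have := (div_le_iff₀ hnbpos).1 hlog
      linarith
    have hKub : (K n : ℝ) ≤ 3 / b n := by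
      have h1 : (K n : ℝ) < 2 / b n + 1 := Nat.ceil_lt_add_one (le_of_lt (div_pos two_pos (hbpos n)))
      have h2 : (1:ℝ) ≤ 1 / b n := by
        rw [le_div_iff₀ (hbpos n)]; linarith
      have : 2 / b n + 1 ≤ 3 / b n := by
        have : (2:ℝ) / b n + 1 / b n = 3 / b n := by ring
        linarith
      linarith
    have hinvb : 1 / b n ≤ ε' * n := by
      rw [div_le_iff₀ (hbpos n)]
      calc (1:ℝ) ≤ Real.log n := hL1
        _ ≤ ε' * ((n:ℝ) * b n) := hLbound
        _ = ε' * n * b n := by ring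
    have hKub2 : (K n : ℝ) ≤ 3 * (ε' * n) := by
      calc (K n : ℝ) ≤ 3 / b n := hKub
        _ = 3 * (1 / b n) := by ring
        _ ≤ 3 * (ε' * n) := by linarith [hinvb]
    have hexparg : 3 * Real.log n ≤ (c * p / (K n : ℝ)) * n := by
      have hcp : c * p = 9 * ε' := by rw [hε'_def]; ring
      have hKb : (K n : ℝ) * b n ≤ 3 := (le_div_iff₀ (hbpos n)).1 hKub
      have hK3 : b n / 3 ≤ 1 / (K n : ℝ) := by
        rw [div_le_div_iff₀ (by norm_num) (hKpos n)]
        linarith [mul_comm (b n) ((K n : ℕ) : ℝ)]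
      have h1 : (c * p / (K n : ℝ)) * n = (c * p) * (1 / (K n : ℝ)) * n := by ring
      have hcpn : 0 ≤ c * p := le_of_lt (mul_pos hc hp)
      have h2 : (c * p) * (b n / 3) * n ≤ (c * p) * (1 / (K n : ℝ)) * n :=
        mul_le_mul_of_nonneg_right (mul_le_mul_of_nonneg_left hK3 hcpn) hn0.le
      have h3 : 3 * Real.log n ≤ (c * p) * (b n / 3) * n := by
        rw [hcp]
        calc 3 * Real.log n ≤ 3 * (ε' * ((n:ℝ) * b n)) := by linarith
          _ = 9 * ε' * (b n / 3) * n := by ring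
      linarith [h1, h2, h3]
    have hexp : Real.exp (-(c * p / (K n : ℝ)) * n) ≤ ((n:ℝ)^3)⁻¹ := by
      have h1 : Real.exp (-(c * p / (K n : ℝ)) * n) ≤ Real.exp (-(3 * Real.log n)) := by
        apply Real.exp_le_exp.2
        linarith [hexparg]
      have h2 : Real.exp (-(3 * Real.log n)) = ((n:ℝ)^3)⁻¹ := by
        rw [Real.exp_neg]
        congr 1
        rw [show (3:ℝ) * Real.log n = ((3:ℕ):ℝ) * Real.log n by norm_num,
          Real.exp_nat_mul, Real.exp_log hn0]
      rw [h2] at h1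
      exact h1
    rw [← ENNReal.ofReal_natCast (K n), ← ENNReal.ofReal_mul (p := ((K n : ℕ) : ℝ)) (Nat.cast_nonneg _)]
    apply ENNReal.ofReal_le_ofReal
    have hfinal : (K n : ℝ) * Real.exp (-(c * p / (K n : ℝ)) * n)
        ≤ 3 * (ε' * n) * ((n:ℝ)^3)⁻¹ := by
      exact mul_le_mul hKub2 hexp (Real.exp_nonneg _)
        (mul_nonneg (by norm_num) (mul_nonneg hε'pos.le hn0.le))
    calc (K n : ℝ) * Real.exp (-(c * p / (K n : ℝ)) * n)
        ≤ 3 * (ε' * n) * ((n:ℝ)^3)⁻¹ := hfinal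
      _ = 3 * ε' / (n:ℝ)^2 := by
          have hn0' : (n:ℝ) ≠ 0 := ne_of_gt hn0
          rw [div_eq_mul_inv, show ((n:ℝ)^3) = (n:ℝ) * (n:ℝ)^2 by ring, mul_inv,
            show (3:ℝ) * (ε' * n) * ((n:ℝ)⁻¹ * (((n:ℝ)^2)⁻¹))
              = 3 * ε' * ((n:ℝ) * (n:ℝ)⁻¹) * (((n:ℝ)^2)⁻¹) by ring,
            mul_inv_cancel₀ hn0']
          ring
  -- conclude
  have hzero : Tendsto (fun n : ℕ => ENNReal.ofReal (3 * ε' / (n:ℝ)^2)) atTop (𝓝 0) := by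
    rw [show (0:ℝ≥0∞) = ENNReal.ofReal 0 by simp]
    apply ENNReal.tendsto_ofReal
    have hpow : Tendsto (fun n : ℕ => ((n:ℝ))^2) atTop atTop :=
      (tendsto_pow_atTop (by norm_num)).comp tendsto_natCast_atTop_atTop
    simpa using (tendsto_const_nhds.div_atTop hpow : Tendsto (fun n : ℕ => 3 * ε' / (n:ℝ)^2) atTop (𝓝 0))
  refine tendsto_of_tendsto_of_tendsto_of_le_of_le' tendsto_const_nhds hzero
    (Filter.Eventually.of_forall (fun n => zero_le)) ?_
  have hbev : ∀ᶠ n : ℕ in atTop, b n < r ∧ b n ≤ 1 := by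
    filter_upwards [hb0.eventually (eventually_lt_nhds hr),
      hb0.eventually (eventually_le_nhds (by norm_num : (0:ℝ) < 1))] with n h1 h2
    exact ⟨h1, h2⟩
  filter_upwards [hbev, hbound_ev] with n hbn hbd
  refine le_trans (le_trans (measure_mono ?_) (hBadBound n)) hbd
  intro ω hmem
  by_contra hnot
  exact absurd hmem (not_lt.2 (key n hbn.1 hbn.2 ω hnot))
end

section
/- Uniform smallness of the nearest error (random design): under assumptions (A1), (A2) and (A4), sup_{x∈[0,1]} min{|ε_i| : 1 ≤ i ≤ n, |X_i − x| ≤ b_n} = o_P(1), where the minimum over an empty index set is interpreted as +∞; i.e. for every δ > 0, P(sup_{x∈[0,1]} min_{i : |X_i−x| ≤ b_n} |ε_i| > δ) → 0 as n → ∞. -/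
open MeasureTheory ProbabilityTheory Filter Topology
open scoped ENNReal


lemma aux_lintegral_prod {Ω : Type} [MeasureSpace Ω] [IsProbabilityMeasure (ℙ : Measure Ω)]
    (f : ℕ → Ω → ℝ≥0∞) (hmeas : ∀ i, Measurable (f i))
    (hindep : iIndepFun f ℙ) :
    ∀ n : ℕ, ∫⁻ ω, ∏ i ∈ Finset.range n, f i ω ∂ℙ = ∏ i ∈ Finset.range n, ∫⁻ ω, f i ω ∂ℙ := by
  intro n
  induction n with
  | zero => simp
  | succ n ih =>
    have hpa : (∏ j ∈ Finset.range n, f j) = fun ω => ∏ j ∈ Finset.range n, f j ω :=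
      funext fun ω => Finset.prod_apply ω _ _
    have hprodmeas : Measurable (∏ j ∈ Finset.range n, f j) := by
      rw [hpa]; exact Finset.measurable_prod _ fun i _ => hmeas i
    have hind := hindep.indepFun_prod_range_succ hmeas n
    have key := lintegral_mul_eq_lintegral_mul_lintegral_of_indepFun hprodmeas (hmeas n) hind
    calc ∫⁻ ω, ∏ i ∈ Finset.range (n+1), f i ω ∂ℙ
        = ∫⁻ ω, ((∏ j ∈ Finset.range n, f j) * f n) ω ∂ℙ := by
          refine lintegral_congr fun ω => ?_
          simp [Finset.prod_apply, Finset.prod_range_succ]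
      _ = (∫⁻ ω, (∏ j ∈ Finset.range n, f j) ω ∂ℙ) * ∫⁻ ω, f n ω ∂ℙ := key
      _ = ∏ i ∈ Finset.range (n+1), ∫⁻ ω, f i ω ∂ℙ := by
          rw [Finset.prod_range_succ, ← ih, hpa]

lemma aux_arith (p a : ℝ≥0∞) (hp : p ≤ 1) (ha : a ≤ 1) :
    (1 - p) * a + (1 - a) = 1 - p * a := by
  have hpa : p * a ≤ 1 := mul_le_one' hp ha
  have h1 : (1 - p) * a + p * a = a := by
    rw [← add_mul, tsub_add_cancel_of_le hp, one_mul]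
  have h2 : ((1 - p) * a + (1 - a)) + p * a = 1 := by
    rw [add_right_comm, h1, add_tsub_cancel_of_le ha]
  exact (ENNReal.sub_eq_of_eq_add (hpa.trans_lt ENNReal.one_lt_top).ne (h2.symm ▸ rfl)).symm

lemma aux_bad_prob {Ω : Type} [MeasureSpace Ω] [IsProbabilityMeasure (ℙ : Measure Ω)]
    (X ε : ℕ → Ω → ℝ) (δ : ℝ)
    (hεmeas : ∀ i, Measurable (ε i))
    (hεiid : iIndepFun ε ℙ)
    (hεid : ∀ i, IdentDistrib (ε i) (ε 0) ℙ ℙ)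
    (hindepεX : IndepFun (fun ω i => ε i ω) (fun ω i => X i ω) ℙ)
    -- (A2): covariates i.i.d. with density f_X continuous and bounded away
    -- from zero on its support [0,1]
    (hXmeas : ∀ i, Measurable (X i))
    (hXiid : iIndepFun X ℙ)
    (hXid : ∀ i, Measure.map (X i) ℙ = Measure.map (X 0) ℙ)
    (J : Set ℝ) (hJ : MeasurableSet J) (n : ℕ) :
    ℙ {ω | ∀ i < n, ¬(X i ω ∈ J ∧ |ε i ω| ≤ δ)}
      = (1 - ℙ (X 0 ⁻¹' J) * ℙ {ω | |ε 0 ω| ≤ δ}) ^ n := by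
  classical
  set p := ℙ (X 0 ⁻¹' J) with hp_def
  set a := ℙ {ω | |ε 0 ω| ≤ δ} with ha_def
  set Xv : Ω → ℕ → ℝ := fun ω i => X i ω with hXv
  set εv : Ω → ℕ → ℝ := fun ω i => ε i ω with hεv
  have hXvmeas : Measurable Xv := measurable_pi_lambda _ hXmeas
  have hεvmeas : Measurable εv := measurable_pi_lambda _ hεmeas
  have hE' : MeasurableSet {y : ℝ | |y| ≤ δ} := by
    have : {y : ℝ | |y| ≤ δ} = Set.Icc (-δ) δ := by ext y; simp [abs_le]
    rw [this]; exact measurableSet_Icc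
  set g : ℝ → ℝ≥0∞ := fun y => if |y| ≤ δ then 1 - p else 1 with hg_def
  have hgmeas : Measurable g := Measurable.ite hE' measurable_const measurable_const
  set S : Set ((ℕ → ℝ) × (ℕ → ℝ)) :=
    ⋂ i ∈ Finset.range n, {q : (ℕ → ℝ) × (ℕ → ℝ) | ¬(q.2 i ∈ J ∧ |q.1 i| ≤ δ)} with hS_def
  have hS : MeasurableSet S := by
    refine MeasurableSet.biInter (Finset.range n).countable_toSet fun i _ => ?_
    have : {q : (ℕ → ℝ) × (ℕ → ℝ) | ¬(q.2 i ∈ J ∧ |q.1 i| ≤ δ)}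
        = (((fun q : (ℕ → ℝ) × (ℕ → ℝ) => q.2 i) ⁻¹' J) ∩
           ((fun q : (ℕ → ℝ) × (ℕ → ℝ) => q.1 i) ⁻¹' {y | |y| ≤ δ}))ᶜ := by
      ext q; simp [Set.mem_setOf_eq]
    rw [this]
    exact (((measurable_pi_apply i).comp measurable_snd hJ).inter
      (((measurable_pi_apply i).comp measurable_fst) hE')).compl
  have hAS : {ω | ∀ i < n, ¬(X i ω ∈ J ∧ |ε i ω| ≤ δ)} = (fun ω => (εv ω, Xv ω)) ⁻¹' S := by
    ext ω
    simp [hS_def, Xv, εv, Set.mem_iInter, Finset.mem_range]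
  rw [hAS, ← Measure.map_apply (hεvmeas.prodMk hXvmeas) hS,
    (indepFun_iff_map_prod_eq_prod_map_map hεvmeas.aemeasurable hXvmeas.aemeasurable).mp hindepεX]
  haveI : IsProbabilityMeasure (Measure.map Xv ℙ) := Measure.isProbabilityMeasure_map hXvmeas.aemeasurable
  haveI : IsProbabilityMeasure (Measure.map εv ℙ) := Measure.isProbabilityMeasure_map hεvmeas.aemeasurable
  rw [Measure.prod_apply hS]
  have hinner : ∀ e : ℕ → ℝ,
      Measure.map Xv ℙ (Prod.mk e ⁻¹' S) = ∏ i ∈ Finset.range n, g (e i) := by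
    intro e
    have hset : Prod.mk e ⁻¹' S
        = ⋂ i ∈ (Finset.range n).filter (fun i => |e i| ≤ δ),
            (fun x : ℕ → ℝ => x i) ⁻¹' Jᶜ := by
      ext x
      simp only [hS_def, Set.preimage_iInter, Set.mem_iInter, Set.mem_preimage,
        Finset.mem_filter, Finset.mem_range, Set.mem_setOf_eq, Set.mem_compl_iff]
      constructor
      · rintro h i ⟨hi, he⟩ hx
        exact h i hi ⟨hx, he⟩
      · rintro h i hi ⟨hx, he⟩
        exact h i ⟨hi, he⟩ hx
    have hmeas2 : MeasurableSet (⋂ i ∈ (Finset.range n).filter (fun i => |e i| ≤ δ),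
        ((fun x : ℕ → ℝ => x i) ⁻¹' Jᶜ)) :=
      MeasurableSet.biInter (Finset.countable_toSet _)
        (fun i _ => measurable_pi_apply i hJ.compl)
    rw [hset, Measure.map_apply hXvmeas hmeas2]
    have hpre : Xv ⁻¹' (⋂ i ∈ (Finset.range n).filter (fun i => |e i| ≤ δ),
        ((fun x : ℕ → ℝ => x i) ⁻¹' Jᶜ)) = ⋂ i ∈ (Finset.range n).filter (fun i => |e i| ≤ δ),
        X i ⁻¹' Jᶜ := by
      ext ω; simp [Xv]
    rw [hpre, hXiid.meas_biInter (fun i _ => ⟨Jᶜ, hJ.compl, rfl⟩)]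
    have hcompl : ∀ i, ℙ (X i ⁻¹' Jᶜ) = 1 - p := by
      intro i
      rw [Set.preimage_compl, prob_compl_eq_one_sub (hXmeas i hJ), hp_def,
        ← Measure.map_apply (hXmeas i) hJ, hXid i, Measure.map_apply (hXmeas 0) hJ]
    rw [Finset.prod_congr rfl (fun i _ => hcompl i), Finset.prod_filter]
  have hFmeas : Measurable (fun e : ℕ → ℝ => ∏ i ∈ Finset.range n, g (e i)) :=
    Finset.measurable_prod _ fun i _ =>
      (hgmeas.comp (measurable_pi_apply i) : Measurable fun e : ℕ → ℝ => g (e i))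
  rw [lintegral_congr hinner, lintegral_map hFmeas hεvmeas]
  have hrw : (fun ω => ∏ i ∈ Finset.range n, g (εv ω i)) = fun ω => ∏ i ∈ Finset.range n,
      (fun j => fun ω' => g (ε j ω')) i ω := rfl
  rw [hrw, aux_lintegral_prod (fun j ω' => g (ε j ω'))
    (fun i => (hgmeas.comp (hεmeas i) : Measurable fun ω' => g (ε i ω')))
    ((hεiid.comp (fun _ => g) (fun _ => hgmeas)) :
      iIndepFun (fun j ω' => g (ε j ω')) ℙ)]
  have hfac : ∀ i, ∫⁻ ω, g (ε i ω) ∂ℙ = 1 - p * a := by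
    intro i
    have hA : MeasurableSet (ε i ⁻¹' {y | |y| ≤ δ}) := hεmeas i hE'
    have hPA : ℙ (ε i ⁻¹' {y | |y| ≤ δ}) = a := by
      rw [(hεid i).measure_mem_eq hE']; rfl
    rw [← lintegral_add_compl (fun ω => g (ε i ω)) hA]
    have h1 : ∫⁻ ω in ε i ⁻¹' {y | |y| ≤ δ}, g (ε i ω) ∂ℙ = (1 - p) * a := by
      trans ∫⁻ _ in ε i ⁻¹' {y | |y| ≤ δ}, (1 - p) ∂ℙ
      · exact setLIntegral_congr_fun hA (fun ω hω => if_pos hω)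
      · rw [setLIntegral_const, hPA]
    have h2 : ∫⁻ ω in (ε i ⁻¹' {y | |y| ≤ δ})ᶜ, g (ε i ω) ∂ℙ = 1 - a := by
      trans ∫⁻ _ in (ε i ⁻¹' {y | |y| ≤ δ})ᶜ, (1 : ℝ≥0∞) ∂ℙ
      · exact setLIntegral_congr_fun hA.compl (fun ω hω => if_neg hω)
      · rw [setLIntegral_const, one_mul, prob_compl_eq_one_sub hA, hPA]
    rw [h1, h2]
    exact aux_arith p a prob_le_one prob_le_one
  rw [Finset.prod_congr rfl (fun i _ => hfac i), Finset.prod_const, Finset.card_range]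


lemma aux_incl {Ω : Type} [MeasureSpace Ω]
    (X ε : ℕ → Ω → ℝ) (δ : ℝ) (b : ℕ → ℝ) (n : ℕ) (hb : 0 < b n) (hb1 : b n ≤ 1) :
    {ω : Ω | ENNReal.ofReal δ < ⨆ t : Set.Icc (0 : ℝ) 1,
        ⨅ i : {i : ℕ // i < n ∧ |X i ω - (t : ℝ)| ≤ b n}, ENNReal.ofReal |ε (i : ℕ) ω|}
      ⊆ ⋃ k ∈ Finset.range (⌈2 / b n⌉₊ + 1),
          {ω : Ω | ∀ i < n, ¬(X i ω ∈ Set.Icc (min (k * (b n / 2)) (1 - b n / 2))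
            (min (k * (b n / 2)) (1 - b n / 2) + b n / 2) ∧ |ε i ω| ≤ δ)} := by
  intro ω hω
  by_contra hcon
  simp only [Set.mem_iUnion, Set.mem_setOf_eq, not_exists, not_forall] at hcon
  rw [Set.mem_setOf_eq] at hω
  refine absurd hω (not_lt.mpr ?_)
  refine iSup_le fun t => ?_
  obtain ⟨ht0, ht1⟩ := t.2
  set k := ⌊2 * t.1 / b n⌋₊ with hk_def
  have h2tb : (0 : ℝ) ≤ 2 * t.1 / b n := by positivity
  have hkmem : k ∈ Finset.range (⌈2 / b n⌉₊ + 1) := by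
    refine Finset.mem_range.mpr (Nat.lt_succ_of_le ?_)
    refine (Nat.floor_le_floor ?_).trans (Nat.floor_le_ceil _)
    exact (div_le_div_iff_of_pos_right hb).mpr (by linarith)
  have hfl : (k : ℝ) ≤ 2 * t.1 / b n := Nat.floor_le h2tb
  have hfl2 : 2 * t.1 / b n < (k : ℝ) + 1 := Nat.lt_floor_add_one _
  have hkle : (k : ℝ) * (b n / 2) ≤ t.1 := by
    have := mul_le_mul_of_nonneg_right hfl (le_of_lt (half_pos hb))
    have heq : 2 * t.1 / b n * (b n / 2) = t.1 := by field_simp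
    linarith [heq ▸ this]
  have hklt : t.1 < ((k : ℝ) + 1) * (b n / 2) := by
    have := mul_lt_mul_of_pos_right hfl2 (half_pos hb)
    have heq : 2 * t.1 / b n * (b n / 2) = t.1 := by field_simp
    linarith [heq ▸ this]
  obtain ⟨i, hi, hXi, hεi⟩ := by
    have h := hcon k hkmem
    push_neg at h
    exact h
  set u := min ((k : ℝ) * (b n / 2)) (1 - b n / 2) with hu_def
  obtain ⟨hx1, hx2⟩ := hXi
  have hdist : |X i ω - t.1| ≤ b n := by
    have hu1 : u ≤ (k : ℝ) * (b n / 2) := min_le_left _ _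
    have hu2 : u ≤ 1 - b n / 2 := min_le_right _ _
    have htu : t.1 ≤ u + b n / 2 := by
      rcases le_total ((k : ℝ) * (b n / 2)) (1 - b n / 2) with h | h
      · rw [hu_def, min_eq_left h]; linarith
      · rw [hu_def, min_eq_right h]; linarith
    rw [abs_le]
    constructor <;> linarith
  calc (⨅ i : {i : ℕ // i < n ∧ |X i ω - (t : ℝ)| ≤ b n}, ENNReal.ofReal |ε (i : ℕ) ω|)
      ≤ ENNReal.ofReal |ε i ω| := iInf_le _ (⟨i, hi, hdist⟩ :
        {i : ℕ // i < n ∧ |X i ω - (t : ℝ)| ≤ b n})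
    _ ≤ ENNReal.ofReal δ := ENNReal.ofReal_le_ofReal hεi


lemma aux_p_lb {Ω : Type} [MeasureSpace Ω] [IsProbabilityMeasure (ℙ : Measure Ω)]
    (X0 : Ω → ℝ) (hm : Measurable X0) (fX : ℝ → ℝ)
    (hlaw : Measure.map X0 ℙ =
      (volume.restrict (Set.Icc (0 : ℝ) 1)).withDensity (fun t => ENNReal.ofReal (fX t)))
    (c : ℝ) (hc : 0 ≤ c) (hfX : ∀ t ∈ Set.Icc (0 : ℝ) 1, c ≤ fX t) (u L : ℝ)
    (hu0 : 0 ≤ u) (hu1 : u + L ≤ 1) :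
    ENNReal.ofReal (c * L) ≤ ℙ (X0 ⁻¹' Set.Icc u (u + L)) := by
  rw [← Measure.map_apply hm measurableSet_Icc, hlaw,
    withDensity_apply _ measurableSet_Icc]
  have hsub : Set.Icc u (u + L) ⊆ Set.Icc (0 : ℝ) 1 := fun x hx =>
    ⟨le_trans hu0 hx.1, le_trans hx.2 hu1⟩
  rw [Measure.restrict_restrict measurableSet_Icc, Set.inter_eq_left.mpr hsub]
  calc ENNReal.ofReal (c * L) = ENNReal.ofReal c * volume (Set.Icc u (u + L)) := by
        rw [Real.volume_Icc, add_sub_cancel_left, ← ENNReal.ofReal_mul hc]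
    _ = ∫⁻ _ in Set.Icc u (u + L), ENNReal.ofReal c ∂volume := (setLIntegral_const _ _).symm
    _ ≤ ∫⁻ x in Set.Icc u (u + L), ENNReal.ofReal (fX x) ∂volume := by
        refine lintegral_mono_ae ?_
        filter_upwards [ae_restrict_mem measurableSet_Icc] with x hx
        exact ENNReal.ofReal_le_ofReal (hfX x (hsub hx))

lemma aux_a_lb {Ω : Type} [MeasureSpace Ω] [IsProbabilityMeasure (ℙ : Measure Ω)]
    (ε0 : Ω → ℝ) (hm : Measurable ε0) (F₀ : ℝ → ℝ) (δ : ℝ) (hδ : 0 < δ)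
    (hF₀ : ∀ t, F₀ t = (ℙ {ω | ε0 ω ≤ t}).toReal)
    (hF₀zero : F₀ 0 = 1) :
    ENNReal.ofReal (1 - F₀ (-δ)) ≤ ℙ {ω | |ε0 ω| ≤ δ} := by
  set A := {ω | ε0 ω ≤ 0} with hA_def
  set B := {ω | ε0 ω ≤ -δ} with hB_def
  have hPA : ℙ A = 1 := by
    have h := hF₀ 0
    rw [hF₀zero] at h
    have hne : ℙ A ≠ ⊤ := measure_ne_top _ _
    rw [← ENNReal.ofReal_toReal hne, ← h, ENNReal.ofReal_one]
  have hPB : ℙ B = ENNReal.ofReal (F₀ (-δ)) := by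
    rw [hF₀ (-δ), ENNReal.ofReal_toReal (measure_ne_top _ _)]
  have hsub : A \ B ⊆ {ω | |ε0 ω| ≤ δ} := by
    rintro ω ⟨h1, h2⟩
    have h2' : -δ < ε0 ω := not_le.mp h2
    exact abs_le.mpr ⟨le_of_lt h2', by simp only [hA_def, Set.mem_setOf_eq] at h1; linarith⟩
  calc ENNReal.ofReal (1 - F₀ (-δ)) = 1 - ENNReal.ofReal (F₀ (-δ)) := by
        rw [ENNReal.ofReal_sub _ (by rw [hF₀ (-δ)]; exact ENNReal.toReal_nonneg),
          ENNReal.ofReal_one]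
    _ = ℙ A - ℙ B := by rw [hPA, hPB]
    _ ≤ ℙ (A \ B) := le_measure_diff
    _ ≤ ℙ {ω | |ε0 ω| ≤ δ} := measure_mono hsub

/-- **Uniform smallness of the nearest error (random design).**
Under assumptions (A1), (A2) and (A4),
`sup_{x ∈ [0,1]} min{|ε_i| : i ≤ n, |X_i − x| ≤ b_n} = o_P(1)`, the minimum over an
empty index set being `+∞` (the infimum is taken in `ℝ≥0∞`, so `⨅` over an empty
index type is `⊤`):  for every `δ > 0`,
`P(sup_{x ∈ [0,1]} min_{i : |X_i − x| ≤ b_n} |ε_i| > δ) → 0` as `n → ∞`. -/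
theorem nearest_error_uniformly_small_random_design
    {Ω : Type} [MeasureSpace Ω] [IsProbabilityMeasure (ℙ : Measure Ω)]
    (X Y ε : ℕ → Ω → ℝ) (Λ₀ h₀ F₀ fX : ℝ → ℝ) (b : ℕ → ℝ)
    -- Λ₀ is strictly increasing and continuous
    (hΛ₀mono : StrictMono Λ₀) (hΛ₀cont : Continuous Λ₀)
    -- (A1): model with i.i.d. errors, F₀(0) = 1, F₀(−Δ) < 1 for Δ > 0,
    -- errors independent of covariates
    (hmodel : ∀ i ω, Λ₀ (Y i ω) = h₀ (X i ω) + ε i ω)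
    (hεmeas : ∀ i, Measurable (ε i))
    (hεiid : iIndepFun ε ℙ)
    (hεid : ∀ i, IdentDistrib (ε i) (ε 0) ℙ ℙ)
    (hF₀ : ∀ t, F₀ t = (ℙ {ω | ε 0 ω ≤ t}).toReal)
    (hF₀zero : F₀ 0 = 1)
    (hF₀lt : ∀ d : ℝ, 0 < d → F₀ (-d) < 1)
    (hindepεX : IndepFun (fun ω i => ε i ω) (fun ω i => X i ω) ℙ)
    -- (A2): covariates i.i.d. with density f_X continuous and bounded away
    -- from zero on its support [0,1]
    (hXmeas : ∀ i, Measurable (X i))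
    (hXiid : iIndepFun X ℙ)
    (hXlaw : ∀ i, Measure.map (X i) ℙ =
      (volume.restrict (Set.Icc (0 : ℝ) 1)).withDensity (fun t => ENNReal.ofReal (fX t)))
    (hfXcont : ContinuousOn fX (Set.Icc 0 1))
    (hfXpos : ∃ c > (0 : ℝ), ∀ t ∈ Set.Icc (0 : ℝ) 1, c ≤ fX t)
    -- (A4): b_n > 0, b_n → 0, (log n)/(n b_n) → 0
    (hbpos : ∀ n, 0 < b n) (hb0 : Tendsto b atTop (𝓝 0))
    (hblog : Tendsto (fun n : ℕ => Real.log n / (n * b n)) atTop (𝓝 0)) :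
    ∀ δ : ℝ, 0 < δ →
      Tendsto
        (fun n : ℕ => ℙ {ω : Ω |
          ENNReal.ofReal δ < ⨆ t : Set.Icc (0 : ℝ) 1,
            ⨅ i : {i : ℕ // i < n ∧ |X i ω - (t : ℝ)| ≤ b n},
              ENNReal.ofReal |ε (i : ℕ) ω|})
        atTop (𝓝 0) := by
  intro δ hδ
  obtain ⟨c, hc, hfX⟩ := hfXpos
  have hq : 0 < 1 - F₀ (-δ) := by linarith [hF₀lt δ hδ]
  set q : ℝ := 1 - F₀ (-δ) with hq_def
  have hcq : 0 < c * q := mul_pos hc hq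
  have hXid : ∀ i, Measure.map (X i) ℙ = Measure.map (X 0) ℙ := fun i => by
    rw [hXlaw i, hXlaw 0]
  have haq : ENNReal.ofReal q ≤ ℙ {ω | |ε 0 ω| ≤ δ} :=
    aux_a_lb (ε 0) (hεmeas 0) F₀ δ hδ hF₀ hF₀zero
  set ρ : ℕ → ℝ := fun n => c * q / 2 * b n with hρ_def
  have hρ0 : Tendsto ρ atTop (𝓝 0) := by
    have := hb0.const_mul (c * q / 2)
    simpa using this
  have hlogt : Tendsto (fun n : ℕ => Real.log n) atTop atTop :=
    Real.tendsto_log_atTop.comp tendsto_natCast_atTop_atTop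
  -- the eventual bound
  have hEv : ∀ᶠ n in atTop, ℙ {ω : Ω |
      ENNReal.ofReal δ < ⨆ t : Set.Icc (0 : ℝ) 1,
        ⨅ i : {i : ℕ // i < n ∧ |X i ω - (t : ℝ)| ≤ b n},
          ENNReal.ofReal |ε (i : ℕ) ω|} ≤ ENNReal.ofReal (3 / n) := by
    filter_upwards [hb0.eventually (gt_mem_nhds one_pos),
      hρ0.eventually (gt_mem_nhds one_pos),
      hblog.eventually (gt_mem_nhds (by positivity : (0:ℝ) < c * q / 4)),
      hlogt.eventually_ge_atTop (1 : ℝ),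
      hlogt.eventually_ge_atTop (c * q / 2),
      eventually_ge_atTop 1] with n hb1 hρ1 hlog3 hlog1 hlogcq hn1
    have hbn := hbpos n
    have hnR : (1 : ℝ) ≤ (n : ℝ) := Nat.one_le_cast.mpr hn1
    have hnpos : (0 : ℝ) < (n : ℝ) := by linarith
    have hnbpos : 0 < (n : ℝ) * b n := by positivity
    have hlog3' : Real.log n < c * q / 4 * ((n : ℝ) * b n) := (div_lt_iff₀ hnbpos).mp hlog3
    have hkey : 2 * Real.log n < (n : ℝ) * ρ n := by
      have : (n : ℝ) * ρ n = c * q / 2 * ((n : ℝ) * b n) := by rw [hρ_def]; ring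
      rw [this]; linarith
    have hblow : 2 < (n : ℝ) * b n := by nlinarith
    have hceil : (⌈2 / b n⌉₊ : ℝ) + 1 < (n : ℝ) + 2 := by
      have h2b : 2 / b n < (n : ℝ) := (div_lt_iff₀ hbn).mpr (by linarith)
      have := Nat.ceil_lt_add_one (by positivity : (0 : ℝ) ≤ 2 / b n)
      linarith
    have hρnn : 0 ≤ ρ n := by rw [hρ_def]; positivity
    have h1ρ : 0 ≤ 1 - ρ n := by linarith
    -- real-number estimate
    have hreal : ((⌈2 / b n⌉₊ : ℝ) + 1) * (1 - ρ n) ^ n ≤ 3 / n := by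
      have hexp1 : (1 - ρ n) ^ n ≤ Real.exp (-ρ n) ^ n :=
        pow_le_pow_left₀ h1ρ (by linarith [Real.add_one_le_exp (-ρ n)]) n
      have hexp2 : Real.exp (-ρ n) ^ n = Real.exp ((n : ℝ) * -ρ n) :=
        (Real.exp_nat_mul _ n).symm
      have hexp3 : Real.exp ((n : ℝ) * -ρ n) ≤ Real.exp (-(2 * Real.log n)) :=
        Real.exp_le_exp.mpr (by nlinarith)
      have hexp4 : Real.exp (-(2 * Real.log n)) = (((n : ℝ) ^ 2))⁻¹ := by
        rw [Real.exp_neg]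
        congr 1
        rw [show (2 : ℝ) * Real.log n = ((2 : ℕ) : ℝ) * Real.log n by norm_num,
          Real.exp_nat_mul, Real.exp_log hnpos]
      have hpow : (1 - ρ n) ^ n ≤ ((n : ℝ) ^ 2)⁻¹ := by
        rw [← hexp4]; exact hexp1.trans (hexp2 ▸ hexp3)
      have hmul : ((⌈2 / b n⌉₊ : ℝ) + 1) * (1 - ρ n) ^ n ≤ ((n : ℝ) + 2) * ((n : ℝ) ^ 2)⁻¹ :=
        mul_le_mul hceil.le hpow (pow_nonneg h1ρ n) (by positivity)
      have heq : 3 * (n : ℝ) * ((n : ℝ) ^ 2)⁻¹ = 3 / (n : ℝ) := by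
        field_simp
      have : ((n : ℝ) + 2) * ((n : ℝ) ^ 2)⁻¹ ≤ 3 * (n : ℝ) * ((n : ℝ) ^ 2)⁻¹ :=
        mul_le_mul_of_nonneg_right (by linarith) (by positivity)
      linarith
    -- the ENNReal chain
    calc ℙ {ω : Ω | ENNReal.ofReal δ < ⨆ t : Set.Icc (0 : ℝ) 1,
          ⨅ i : {i : ℕ // i < n ∧ |X i ω - (t : ℝ)| ≤ b n}, ENNReal.ofReal |ε (i : ℕ) ω|}
        ≤ ℙ (⋃ k ∈ Finset.range (⌈2 / b n⌉₊ + 1),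
            {ω : Ω | ∀ i < n, ¬(X i ω ∈ Set.Icc (min (k * (b n / 2)) (1 - b n / 2))
              (min (k * (b n / 2)) (1 - b n / 2) + b n / 2) ∧ |ε i ω| ≤ δ)}) :=
          measure_mono (aux_incl X ε δ b n hbn hb1.le)
      _ ≤ ∑ k ∈ Finset.range (⌈2 / b n⌉₊ + 1),
            ℙ {ω : Ω | ∀ i < n, ¬(X i ω ∈ Set.Icc (min (k * (b n / 2)) (1 - b n / 2))
              (min (k * (b n / 2)) (1 - b n / 2) + b n / 2) ∧ |ε i ω| ≤ δ)} :=
          measure_biUnion_finset_le _ _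
      _ ≤ ∑ _k ∈ Finset.range (⌈2 / b n⌉₊ + 1), (1 - ENNReal.ofReal (ρ n)) ^ n := by
          refine Finset.sum_le_sum fun k _ => ?_
          rw [aux_bad_prob X ε δ hεmeas hεiid hεid hindepεX hXmeas hXiid hXid _
            measurableSet_Icc n]
          refine pow_le_pow_left' (tsub_le_tsub_left ?_ 1) n
          set u : ℝ := min ((k : ℝ) * (b n / 2)) (1 - b n / 2) with hu_def
          have hu0 : 0 ≤ u := le_min (by positivity) (by linarith)
          have hu1 : u + b n / 2 ≤ 1 := by
            have := min_le_right ((k : ℝ) * (b n / 2)) (1 - b n / 2)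
            linarith
          calc ENNReal.ofReal (ρ n)
              = ENNReal.ofReal (c * (b n / 2)) * ENNReal.ofReal q := by
                rw [← ENNReal.ofReal_mul (by positivity)]
                congr 1
                rw [hρ_def]
                ring
            _ ≤ ℙ (X 0 ⁻¹' Set.Icc u (u + b n / 2)) * ℙ {ω | |ε 0 ω| ≤ δ} :=
                mul_le_mul' (aux_p_lb (X 0) (hXmeas 0) fX (hXlaw 0) c hc.le hfX u (b n / 2)
                  hu0 hu1) haq
      _ = ((⌈2 / b n⌉₊ + 1 : ℕ) : ℝ≥0∞) * (1 - ENNReal.ofReal (ρ n)) ^ n := by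
          rw [Finset.sum_const, Finset.card_range, nsmul_eq_mul]
      _ = ENNReal.ofReal (((⌈2 / b n⌉₊ : ℝ) + 1) * (1 - ρ n) ^ n) := by
          have h1 : (1 : ℝ≥0∞) - ENNReal.ofReal (ρ n) = ENNReal.ofReal (1 - ρ n) := by
            rw [ENNReal.ofReal_sub _ hρnn, ENNReal.ofReal_one]
          rw [h1, ← ENNReal.ofReal_pow h1ρ,
            ENNReal.ofReal_mul (by positivity : (0:ℝ) ≤ (⌈2 / b n⌉₊ : ℝ) + 1)]
          congr 1
          rw [← ENNReal.ofReal_natCast (⌈2 / b n⌉₊ + 1)]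
          push_cast
          ring_nf
      _ ≤ ENNReal.ofReal (3 / n) := ENNReal.ofReal_le_ofReal hreal
  have hlim : Tendsto (fun n : ℕ => ENNReal.ofReal (3 / n)) atTop (𝓝 0) := by
    rw [← ENNReal.ofReal_zero]
    exact ENNReal.tendsto_ofReal (tendsto_const_div_atTop_nhds_zero_nat 3)
  exact tendsto_of_tendsto_of_tendsto_of_le_of_le' tendsto_const_nhds hlim
    (Eventually.of_forall fun n => zero_le) hEv
end

section
/- Uniform lower bound on local covariate counts: under assumptions (A2) and (A4) there exists a constant C > 0 such that P( inf_{x∈[0,1]} Σ_{i=1}^n 1{|X_i − x| ≤ b_n} ≥ C n b_n ) → 1 as n → ∞; that is, with probability tending to one, every interval [x − b_n, x + b_n] with x ∈ [0,1] contains at least C n b_n of the covariates X_1,…,X_n. -/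
open MeasureTheory ProbabilityTheory Filter Topology
open scoped ENNReal

section AuxiliaryLemmas

open Real

/-- Multiplicative Chernoff lower-tail bound for counts of i.i.d.-type indicator events. -/
lemma chernoff_count {Ω : Type} [MeasureSpace Ω] [IsProbabilityMeasure (ℙ : Measure Ω)]
    (X : ℕ → Ω → ℝ) (hXmeas : ∀ i, Measurable (X i))
    (hXiid : iIndepFun X ℙ)
    (t r q : ℝ) (hq0 : 0 ≤ q)
    (hq : ∀ i, q ≤ (ℙ {ω | |X i ω - t| ≤ r}).toReal)
    (n : ℕ) (a : ℝ) :
    (ℙ {ω : Ω | ((Finset.filter (fun i => |X i ω - t| ≤ r) (Finset.range n)).card : ℝ) ≤ a}).toReal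
      ≤ Real.exp (Real.log 2 * a) * Real.exp (-(q / 2) * n) := by
  classical
  have hset : MeasurableSet {x : ℝ | |x - t| ≤ r} :=
    measurableSet_le ((measurable_id.sub_const t).abs) measurable_const
  set g : ℝ → ℝ := fun x => if |x - t| ≤ r then 1 else 0 with hg_def
  have hgmeas : Measurable g := Measurable.ite hset measurable_const measurable_const
  set Y : ℕ → Ω → ℝ := fun i => g ∘ X i with hY_def
  have hYmeas : ∀ i, Measurable (Y i) := fun i => hgmeas.comp (hXmeas i)
  have hYiid : iIndepFun Y ℙ := hXiid.comp _ fun _ => hgmeas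
  set p : ℕ → ℝ := fun i => (ℙ {ω | |X i ω - t| ≤ r}).toReal with hp_def
  have hpms : ∀ i, MeasurableSet {ω | |X i ω - t| ≤ r} := fun i =>
    (hXmeas i) hset
  have hp1 : ∀ i, p i ≤ 1 := by
    intro i
    have h := ENNReal.toReal_mono ENNReal.one_ne_top (prob_le_one (μ := ℙ)
      (s := {ω | |X i ω - t| ≤ r}))
    simpa using h
  set τ : ℝ := -Real.log 2 with hτ_def
  have hτ : τ ≤ 0 := neg_nonpos.mpr (Real.log_nonneg one_le_two)
  have hexpτ : Real.exp τ = 1 / 2 := by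
    rw [hτ_def, Real.exp_neg, Real.exp_log two_pos]; norm_num
  have hmgfY : ∀ i, mgf (Y i) ℙ τ = 1 - p i / 2 := by
    intro i
    have heq : (fun ω => Real.exp (τ * Y i ω)) = fun ω =>
        Set.indicator {ω | |X i ω - t| ≤ r} (fun _ => Real.exp τ - 1) ω + 1 := by
      funext ω
      by_cases h : |X i ω - t| ≤ r
      · have hm : ω ∈ {ω | |X i ω - t| ≤ r} := h
        simp only [hY_def, hg_def, Function.comp_apply, if_pos h,
          Set.indicator_of_mem hm, mul_one]
        ring
      · have hm : ω ∉ {ω | |X i ω - t| ≤ r} := h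
        simp only [hY_def, hg_def, Function.comp_apply, if_neg h,
          Set.indicator_of_notMem hm, mul_zero, Real.exp_zero, zero_add]
    rw [mgf, heq, integral_add ((integrable_const _).indicator (hpms i)) (integrable_const 1),
      integral_indicator_const _ (hpms i), integral_const]
    simp only [measure_univ, probReal_univ, Measure.real, ENNReal.toReal_one, one_smul, smul_eq_mul, hexpτ]
    show _ = 1 - (ℙ {ω | |X i ω - t| ≤ r}).toReal / 2
    ring
  -- the count equals the sum of the indicators
  have hS : ∀ ω, (((Finset.range n).filter (fun i => |X i ω - t| ≤ r)).card : ℝ)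
      = (∑ i ∈ Finset.range n, Y i) ω := by
    intro ω
    rw [Finset.sum_apply, Finset.card_filter]
    push_cast
    exact Finset.sum_congr rfl fun i _ => by simp [hY_def, hg_def]
  have hSfun : (∑ i ∈ Finset.range n, Y i) = fun ω => ∑ i ∈ Finset.range n, Y i ω := by
    funext ω; exact Finset.sum_apply ..
  have hSmeas : Measurable (∑ i ∈ Finset.range n, Y i) := by
    rw [hSfun]; exact Finset.measurable_sum _ fun i _ => hYmeas i
  have hSnonneg : ∀ ω, 0 ≤ (∑ i ∈ Finset.range n, Y i) ω := by
    intro ω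
    rw [Finset.sum_apply]
    refine Finset.sum_nonneg fun i _ => ?_
    simp only [hY_def, hg_def, Function.comp_apply]
    positivity
  have h_int : Integrable (fun ω => Real.exp (τ * (∑ i ∈ Finset.range n, Y i) ω)) ℙ := by
    refine Integrable.mono' (integrable_const (1 : ℝ))
      (Real.measurable_exp.comp (hSmeas.const_mul τ)).aestronglyMeasurable ?_
    refine ae_of_all _ fun ω => ?_
    rw [Real.norm_eq_abs, abs_of_nonneg (Real.exp_pos _).le]
    exact Real.exp_le_one_iff.mpr (mul_nonpos_of_nonpos_of_nonneg hτ (hSnonneg ω))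
  have hchern := measure_le_le_exp_mul_mgf (μ := ℙ) (X := ∑ i ∈ Finset.range n, Y i) a hτ h_int
  rw [hYiid.mgf_sum hYmeas] at hchern
  have hq1 : q ≤ 1 := le_trans (hq 0) (hp1 0)
  have hprod : ∏ i ∈ Finset.range n, mgf (Y i) ℙ τ ≤ (1 - q / 2) ^ n := by
    calc ∏ i ∈ Finset.range n, mgf (Y i) ℙ τ
        ≤ ∏ _i ∈ Finset.range n, (1 - q / 2) := by
          refine Finset.prod_le_prod (fun i _ => ?_) (fun i _ => ?_)
          · rw [hmgfY i]; linarith [hp1 i]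
          · rw [hmgfY i]; linarith [hq i]
      _ = (1 - q / 2) ^ n := by rw [Finset.prod_const, Finset.card_range]
  have hpow : (1 - q / 2) ^ n ≤ Real.exp (-(q / 2) * n) := by
    have h1 : (0 : ℝ) ≤ 1 - q / 2 := by linarith
    have h2 : 1 - q / 2 ≤ Real.exp (-(q / 2)) := by
      linarith [Real.add_one_le_exp (-(q / 2))]
    calc (1 - q / 2) ^ n ≤ Real.exp (-(q / 2)) ^ n := pow_le_pow_left₀ h1 h2 n
      _ = Real.exp (-(q / 2) * n) := by rw [← Real.exp_nat_mul, mul_comm]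
  have hsetEq : {ω : Ω | (∑ i ∈ Finset.range n, Y i) ω ≤ a}
      = {ω : Ω | ((Finset.filter (fun i => |X i ω - t| ≤ r) (Finset.range n)).card : ℝ) ≤ a} := by
    ext ω; simp only [Set.mem_setOf_eq, hS]
  rw [hsetEq] at hchern
  have hneg : -τ = Real.log 2 := by rw [hτ_def, neg_neg]
  calc (ℙ {ω : Ω | ((Finset.filter (fun i => |X i ω - t| ≤ r) (Finset.range n)).card : ℝ) ≤ a}).toReal
      ≤ Real.exp (-τ * a) * ∏ i ∈ Finset.range n, mgf (Y i) ℙ τ := hchern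
    _ ≤ Real.exp (-τ * a) * Real.exp (-(q / 2) * n) := by
        refine mul_le_mul_of_nonneg_left (hprod.trans hpow) (Real.exp_pos _).le
    _ = Real.exp (Real.log 2 * a) * Real.exp (-(q / 2) * n) := by rw [hneg]

lemma prob_ball_lower {Ω : Type} [MeasureSpace Ω] [IsProbabilityMeasure (ℙ : Measure Ω)]
    (W : Ω → ℝ) (fX : ℝ → ℝ) (hW : Measurable W)
    (hlaw : Measure.map W ℙ =
      (volume.restrict (Set.Icc (0 : ℝ) 1)).withDensity (fun t => ENNReal.ofReal (fX t)))
    (c : ℝ) (hc : 0 < c) (hcf : ∀ t ∈ Set.Icc (0 : ℝ) 1, c ≤ fX t)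
    (t r : ℝ) (ht : t ∈ Set.Icc (0 : ℝ) 1) (hr0 : 0 < r) (hr2 : r ≤ 1 / 2) :
    c * r ≤ (ℙ {ω | |W ω - t| ≤ r}).toReal := by
  obtain ⟨ht0, ht1⟩ := ht
  have hsetEq : {ω | |W ω - t| ≤ r} = W ⁻¹' Set.Icc (t - r) (t + r) := by
    ext ω
    simp only [Set.mem_setOf_eq, Set.mem_preimage, Set.mem_Icc, abs_le]
    constructor <;> rintro ⟨h1, h2⟩ <;> constructor <;> linarith
  set u : ℝ := if t + r ≤ 1 then t else t - r with hu
  have hu0 : 0 ≤ u := by rw [hu]; split_ifs with h <;> linarith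
  have hu1 : u + r ≤ 1 := by rw [hu]; split_ifs with h <;> linarith
  have hul : t - r ≤ u := by rw [hu]; split_ifs with h <;> linarith
  have hur : u + r ≤ t + r := by rw [hu]; split_ifs with h <;> linarith
  have hsub1 : Set.Icc u (u + r) ⊆ Set.Icc (0 : ℝ) 1 := Set.Icc_subset_Icc hu0 hu1
  have hsub2 : Set.Icc u (u + r) ⊆ Set.Icc (t - r) (t + r) := Set.Icc_subset_Icc hul hur
  set μ' := (volume.restrict (Set.Icc (0 : ℝ) 1)).withDensity (fun t => ENNReal.ofReal (fX t))
    with hμ'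
  have key : ENNReal.ofReal (c * r) ≤ μ' (Set.Icc (t - r) (t + r)) := by
    calc ENNReal.ofReal (c * r) = ENNReal.ofReal c * volume (Set.Icc u (u + r)) := by
          rw [Real.volume_Icc, add_sub_cancel_left, ← ENNReal.ofReal_mul hc.le]
      _ = ∫⁻ _x in Set.Icc u (u + r), ENNReal.ofReal c ∂volume := by
          rw [setLIntegral_const, mul_comm]
      _ ≤ ∫⁻ x in Set.Icc u (u + r), ENNReal.ofReal (fX x) ∂volume := by
          refine lintegral_mono_ae ((ae_restrict_iff' measurableSet_Icc).mpr
            (ae_of_all _ fun x hx => ?_))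
          exact ENNReal.ofReal_le_ofReal (hcf x (hsub1 hx))
      _ = ∫⁻ x in Set.Icc u (u + r), ENNReal.ofReal (fX x)
            ∂(volume.restrict (Set.Icc (0 : ℝ) 1)) := by
          rw [Measure.restrict_restrict measurableSet_Icc, Set.inter_eq_left.mpr hsub1]
      _ = μ' (Set.Icc u (u + r)) := (withDensity_apply _ measurableSet_Icc).symm
      _ ≤ μ' (Set.Icc (t - r) (t + r)) := measure_mono hsub2
  have hmap : ℙ (W ⁻¹' Set.Icc (t - r) (t + r)) = μ' (Set.Icc (t - r) (t + r)) := by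
    rw [← Measure.map_apply hW measurableSet_Icc, hlaw]
  rw [hsetEq]
  calc c * r = (ENNReal.ofReal (c * r)).toReal :=
        (ENNReal.toReal_ofReal (mul_nonneg hc.le hr0.le)).symm
    _ ≤ (ℙ (W ⁻¹' Set.Icc (t - r) (t + r))).toReal := by
        refine ENNReal.toReal_mono (measure_ne_top _ _) ?_
        rw [hmap]; exact key

lemma seq_limit (b : ℕ → ℝ) (β : ℝ) (hβ : 0 < β) (hbpos : ∀ n, 0 < b n)
    (hblog : Tendsto (fun n : ℕ => Real.log n / (n * b n)) atTop (𝓝 0)) :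
    Tendsto (fun n : ℕ => ((⌊1 / b n⌋₊ : ℝ) + 2) * Real.exp (-(β * (n * b n)))) atTop (𝓝 0) := by
  have h1 : ∀ᶠ n : ℕ in atTop, Real.log n / (n * b n) < β / 2 :=
    hblog.eventually (gt_mem_nhds (half_pos hβ))
  have h2 : ∀ᶠ n : ℕ in atTop, (3 : ℕ) ≤ n := eventually_ge_atTop 3
  refine squeeze_zero' (Eventually.of_forall fun n => by positivity)
    ?_ (tendsto_const_div_atTop_nhds_zero_nat (β / 2 + 2))
  filter_upwards [h1, h2] with n hn1 hn3
  have hn0 : (0 : ℝ) < n := by exact_mod_cast (by omega : 0 < n)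
  have hn1' : (1 : ℝ) ≤ n := by exact_mod_cast (by omega : 1 ≤ n)
  have hb := hbpos n
  have hnb : (0 : ℝ) < n * b n := by positivity
  have hlogn : (1 : ℝ) ≤ Real.log n := by
    rw [Real.le_log_iff_exp_le hn0]
    calc Real.exp 1 ≤ 2.7182818286 := Real.exp_one_lt_d9.le
      _ ≤ 3 := by norm_num
      _ ≤ n := by exact_mod_cast hn3
  have hkey : Real.log n < β / 2 * (n * b n) := by
    rw [div_lt_iff₀ hnb] at hn1; linarith [hn1]
  -- exp bound
  have hE : Real.exp (-(β * (n * b n))) ≤ ((n : ℝ) ^ 2)⁻¹ := by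
    have : Real.exp (-(β * (n * b n))) ≤ Real.exp (-(2 * Real.log n)) := by
      apply Real.exp_le_exp.mpr; nlinarith [hkey, hlogn]
    refine this.trans_eq ?_
    rw [Real.exp_neg]
    congr 1
    rw [show (2 : ℝ) * Real.log n = (2 : ℕ) * Real.log n by norm_num,
      Real.exp_nat_mul, Real.exp_log hn0]
  -- floor bound
  have hF : (⌊1 / b n⌋₊ : ℝ) + 2 ≤ β / 2 * n + 2 := by
    have h1b : (⌊1 / b n⌋₊ : ℝ) ≤ 1 / b n := Nat.floor_le (by positivity)
    have h1b' : 1 / b n ≤ β / 2 * n := by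
      rw [div_le_iff₀ hb]
      have : (2 : ℝ) / β ≤ n * b n := by
        rw [div_le_iff₀ hβ]; nlinarith [hkey, hlogn]
      nlinarith [this, hβ]
    linarith
  calc ((⌊1 / b n⌋₊ : ℝ) + 2) * Real.exp (-(β * (n * b n)))
      ≤ (β / 2 * n + 2) * ((n : ℝ) ^ 2)⁻¹ := by
        refine mul_le_mul hF hE (Real.exp_pos _).le (by positivity)
    _ ≤ (β / 2 + 2) / n := by
        rw [le_div_iff₀ hn0]
        have e1 : (β / 2 * (n : ℝ) + 2) * (((n : ℝ) ^ 2)⁻¹) * n = β / 2 + 2 / n := by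
          field_simp
        rw [e1]
        have h2' : 2 / (n : ℝ) ≤ 2 := div_le_self (by norm_num) hn1'
        linarith

end AuxiliaryLemmas

/-- **Uniform lower bound on local covariate counts.**
Under assumptions (A2) and (A4) there exists a constant `C > 0` such that
`P( inf_{x ∈ [0,1]} Σ_{i=1}^n 1{|X_i − x| ≤ b_n} ≥ C n b_n ) → 1` as `n → ∞`:
with probability tending to one, every interval `[x − b_n, x + b_n]`, `x ∈ [0,1]`,
contains at least `C n b_n` of the covariates `X_1,…,X_n`. -/
theorem local_covariate_count_lower_bound
    {Ω : Type} [MeasureSpace Ω] [IsProbabilityMeasure (ℙ : Measure Ω)]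
    (X : ℕ → Ω → ℝ) (fX : ℝ → ℝ) (b : ℕ → ℝ)
    -- (A2): X_1, X_2, … are i.i.d. with density f_X, continuous and bounded
    -- away from zero on its support [0,1]
    (hXmeas : ∀ i, Measurable (X i))
    (hXiid : iIndepFun X ℙ)
    (hXlaw : ∀ i, Measure.map (X i) ℙ =
      (volume.restrict (Set.Icc (0 : ℝ) 1)).withDensity (fun t => ENNReal.ofReal (fX t)))
    (hfXcont : ContinuousOn fX (Set.Icc 0 1))
    (hfXpos : ∃ c > (0 : ℝ), ∀ t ∈ Set.Icc (0 : ℝ) 1, c ≤ fX t)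
    -- (A4): b_n > 0, b_n → 0 and (log n)/(n b_n) → 0
    (hbpos : ∀ n, 0 < b n) (hb0 : Tendsto b atTop (𝓝 0))
    (hblog : Tendsto (fun n : ℕ => Real.log n / (n * b n)) atTop (𝓝 0)) :
    ∃ C : ℝ, 0 < C ∧
      Tendsto
        (fun n : ℕ => ℙ {ω : Ω | ∀ t ∈ Set.Icc (0 : ℝ) 1,
            C * n * b n ≤
              (((Finset.range n).filter (fun i => |X i ω - t| ≤ b n)).card : ℝ)})
        atTop (𝓝 1) := by
  obtain ⟨c, hc0, hcf⟩ := hfXpos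
  refine ⟨c / 8, by positivity, ?_⟩
  set r : ℕ → ℝ := fun n => b n / 2 with hr_def
  set tj : ℕ → ℕ → ℝ := fun n j => min (j * b n) 1 with htj_def
  set M : ℕ → ℕ := fun n => ⌊1 / b n⌋₊ + 1 with hM_def
  set S : ℕ → ℕ → Ω → ℝ := fun n j ω =>
    (((Finset.range n).filter (fun i => |X i ω - tj n j| ≤ r n)).card : ℝ) with hS_def
  set G : ℕ → Set Ω := fun n =>
    ⋂ j ∈ Finset.range (M n + 1), {ω | c / 8 * n * b n ≤ S n j ω} with hG_def
  -- Step A : deterministic covering, G n ⊆ target event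
  have hGE : ∀ n, G n ⊆ {ω : Ω | ∀ t ∈ Set.Icc (0 : ℝ) 1,
      c / 8 * n * b n ≤ (((Finset.range n).filter (fun i => |X i ω - t| ≤ b n)).card : ℝ)} := by
    intro n ω hω t ht
    obtain ⟨ht0, ht1⟩ := ht
    have hb := hbpos n
    set j : ℕ := ⌊t / b n + 1 / 2⌋₊ with hj_def
    have hjle : (j : ℝ) ≤ t / b n + 1 / 2 := Nat.floor_le (by positivity)
    have hjgt : t / b n + 1 / 2 < (j : ℝ) + 1 := Nat.lt_floor_add_one _
    have htb : t / b n * b n = t := div_mul_cancel₀ t hb.ne'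
    have h1 : (j : ℝ) * b n ≤ t + b n / 2 := by
      have h := mul_le_mul_of_nonneg_right hjle hb.le
      rw [add_mul, htb] at h; linarith
    have h2 : t - b n / 2 < (j : ℝ) * b n := by
      have h := mul_lt_mul_of_pos_right hjgt hb
      rw [add_mul, add_mul, htb, one_mul] at h; linarith
    have hjM : j ≤ M n := by
      have hmono : t / b n + 1 / 2 ≤ 1 / b n + 1 := by
        have : t / b n ≤ 1 / b n := by gcongr
        linarith
      calc j ≤ ⌊1 / b n + 1⌋₊ := Nat.floor_mono hmono
        _ = M n := by rw [Nat.floor_add_one (by positivity), hM_def]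
    have hjmem : j ∈ Finset.range (M n + 1) := Finset.mem_range.mpr (Nat.lt_succ_of_le hjM)
    have hdist : |t - tj n j| ≤ b n / 2 := by
      rw [htj_def]
      dsimp only
      by_cases hcase : (j : ℝ) * b n ≤ 1
      · rw [min_eq_left hcase, abs_le]; constructor <;> linarith
      · push_neg at hcase
        rw [min_eq_right hcase.le, abs_of_nonpos (by linarith)]
        linarith
    have hsub : (Finset.range n).filter (fun i => |X i ω - tj n j| ≤ r n) ⊆
        (Finset.range n).filter (fun i => |X i ω - t| ≤ b n) := by
      intro i hi
      rw [Finset.mem_filter] at hi ⊢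
      refine ⟨hi.1, ?_⟩
      have h3 := abs_sub_le (X i ω) (tj n j) t
      have h4 : |tj n j - t| = |t - tj n j| := abs_sub_comm _ _
      have h5 : r n = b n / 2 := by rw [hr_def]
      have h6 := hi.2
      rw [h5] at h6
      linarith [hdist]
    have hmem := hω
    rw [hG_def] at hmem
    simp only [Set.mem_iInter] at hmem
    have hSj := hmem j hjmem
    calc c / 8 * n * b n ≤ S n j ω := hSj
      _ ≤ _ := by
        rw [hS_def]
        dsimp only
        exact_mod_cast Finset.card_le_card hsub
  -- Step B : measurability
  have hSmeas : ∀ n j, Measurable (S n j) := by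
    intro n j
    rw [hS_def]
    dsimp only
    have heq : (fun ω => (((Finset.range n).filter (fun i => |X i ω - tj n j| ≤ r n)).card : ℝ))
        = fun ω => ∑ i ∈ Finset.range n, if |X i ω - tj n j| ≤ r n then (1 : ℝ) else 0 := by
      funext ω
      rw [Finset.card_filter]
      push_cast
      rfl
    rw [heq]
    exact Finset.measurable_sum _ fun i _ =>
      Measurable.ite (measurableSet_le ((hXmeas i).sub_const _).abs measurable_const)
        measurable_const measurable_const
  have hGmeas : ∀ n, MeasurableSet (G n) := by
    intro n
    rw [hG_def]
    exact MeasurableSet.biInter (Finset.range (M n + 1)).countable_toSet fun j _ =>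
      measurableSet_le measurable_const (hSmeas n j)
  -- Step C : union + Chernoff bound, eventually in n
  have hb1 : ∀ᶠ n : ℕ in atTop, b n ≤ 1 :=
    (hb0.eventually (gt_mem_nhds (by norm_num : (0 : ℝ) < 1))).mono fun n h => h.le
  have hPbound : ∀ᶠ n : ℕ in atTop, ℙ ((G n)ᶜ) ≤
      ((M n + 1 : ℕ) : ℝ≥0∞) * ENNReal.ofReal (Real.exp (-(c / 8 * (n * b n)))) := by
    filter_upwards [hb1] with n hbn1
    have hb := hbpos n
    have hper : ∀ j ∈ Finset.range (M n + 1),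
        ℙ {ω | S n j ω ≤ c / 8 * n * b n} ≤
          ENNReal.ofReal (Real.exp (-(c / 8 * (n * b n)))) := by
      intro j hj
      have htj0 : tj n j ∈ Set.Icc (0 : ℝ) 1 := by
        rw [htj_def]
        exact ⟨le_min (by positivity) zero_le_one, min_le_right _ _⟩
      have hr0 : 0 < r n := by rw [hr_def]; dsimp only; positivity
      have hr2 : r n ≤ 1 / 2 := by rw [hr_def]; dsimp only; linarith
      have hql : ∀ i, c * r n ≤ (ℙ {ω | |X i ω - tj n j| ≤ r n}).toReal := fun i =>
        prob_ball_lower (X i) fX (hXmeas i) (hXlaw i) c hc0 hcf (tj n j) (r n) htj0 hr0 hr2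
      have hch := chernoff_count X hXmeas hXiid (tj n j) (r n) (c * r n)
        (by positivity) hql n (c / 8 * n * b n)
      have hL : Real.log 2 ≤ 1 := by
        have := Real.log_le_sub_one_of_pos (by norm_num : (0 : ℝ) < 2); linarith
      have hnb : (0 : ℝ) ≤ (n : ℝ) * b n := by positivity
      have hexp : Real.exp (Real.log 2 * (c / 8 * n * b n)) * Real.exp (-(c * r n / 2) * n)
          ≤ Real.exp (-(c / 8 * (n * b n))) := by
        rw [← Real.exp_add]
        apply Real.exp_le_exp.mpr
        rw [hr_def]
        dsimp only
        have hkey : Real.log 2 * (c / 8 * n * b n) ≤ c / 8 * (n * b n) := by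
          nlinarith [mul_nonneg (sub_nonneg.mpr hL)
            (mul_nonneg (by positivity : (0 : ℝ) ≤ c / 8) hnb)]
        nlinarith [hkey, hnb, hc0.le]
      calc ℙ {ω | S n j ω ≤ c / 8 * n * b n}
          = ENNReal.ofReal ((ℙ {ω | S n j ω ≤ c / 8 * n * b n}).toReal) :=
            (ENNReal.ofReal_toReal (measure_ne_top _ _)).symm
        _ ≤ ENNReal.ofReal (Real.exp (-(c / 8 * (n * b n)))) := by
            apply ENNReal.ofReal_le_ofReal
            refine le_trans ?_ hexp
            simp only [hS_def]
            exact hch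
    have hcompl : (G n)ᶜ ⊆ ⋃ j ∈ Finset.range (M n + 1), {ω | S n j ω ≤ c / 8 * n * b n} := by
      rw [hG_def]
      intro ω hω
      simp only [Set.mem_compl_iff, Set.mem_iInter, Set.mem_setOf_eq, not_forall] at hω
      obtain ⟨j, hj, hlt⟩ := hω
      exact Set.mem_biUnion hj (le_of_not_ge hlt)
    calc ℙ ((G n)ᶜ)
        ≤ ℙ (⋃ j ∈ Finset.range (M n + 1), {ω | S n j ω ≤ c / 8 * n * b n}) :=
          measure_mono hcompl
      _ ≤ ∑ j ∈ Finset.range (M n + 1), ℙ {ω | S n j ω ≤ c / 8 * n * b n} :=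
          measure_biUnion_finset_le _ _
      _ ≤ ∑ _j ∈ Finset.range (M n + 1), ENNReal.ofReal (Real.exp (-(c / 8 * (n * b n)))) :=
          Finset.sum_le_sum hper
      _ = ((M n + 1 : ℕ) : ℝ≥0∞) * ENNReal.ofReal (Real.exp (-(c / 8 * (n * b n)))) := by
          rw [Finset.sum_const, Finset.card_range, nsmul_eq_mul]
  -- Step D : the bound tends to zero
  have hD : Tendsto (fun n : ℕ => ((M n + 1 : ℕ) : ℝ≥0∞) *
      ENNReal.ofReal (Real.exp (-(c / 8 * (n * b n))))) atTop (𝓝 0) := by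
    have hre := seq_limit b (c / 8) (by positivity) hbpos hblog
    have heq : ∀ n : ℕ, ((M n + 1 : ℕ) : ℝ≥0∞) * ENNReal.ofReal (Real.exp (-(c / 8 * (n * b n))))
        = ENNReal.ofReal (((⌊1 / b n⌋₊ : ℝ) + 2) * Real.exp (-(c / 8 * (n * b n)))) := by
      intro n
      rw [ENNReal.ofReal_mul (by positivity), ← ENNReal.ofReal_natCast (M n + 1)]
      congr 1
      rw [hM_def]
      push_cast
      ring
    simp only [heq]
    simpa using ENNReal.tendsto_ofReal hre
  -- Step E : conclude
  have hcompl0 : Tendsto (fun n => ℙ ((G n)ᶜ)) atTop (𝓝 0) :=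
    tendsto_of_tendsto_of_tendsto_of_le_of_le' tendsto_const_nhds hD
      (Eventually.of_forall fun n => zero_le) hPbound
  have hG1 : Tendsto (fun n => ℙ (G n)) atTop (𝓝 1) := by
    have heq : ∀ n, ℙ (G n) = 1 - ℙ ((G n)ᶜ) := by
      intro n
      have h := prob_compl_eq_one_sub (μ := ℙ) (hGmeas n).compl
      rwa [compl_compl] at h
    simp only [heq]
    have h := ENNReal.Tendsto.sub
      (tendsto_const_nhds : Tendsto (fun _ : ℕ => (1 : ℝ≥0∞)) atTop (𝓝 1)) hcompl0
      (Or.inl ENNReal.one_ne_top)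
    simpa using h
  exact tendsto_of_tendsto_of_tendsto_of_le_of_le hG1 tendsto_const_nhds
    (fun n => measure_mono (hGE n)) (fun n => prob_le_one)
end

section
/- Uniform consistency of the local constant boundary estimator (fixed design): under assumptions (A1'), (A2'), (A3) and (A4'), the estimator h̃₀ given by h̃₀(x) = max{Λ₀(Y_{i,n}) : 1 ≤ i ≤ n, |x_{i,n} − x| ≤ b_n} satisfies ‖h̃₀ − h₀‖_∞ = sup_{x∈[0,1]} |h̃₀(x) − h₀(x)| = o_P(1) as n → ∞. -/
open MeasureTheory ProbabilityTheory Filter Topology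
open scoped ENNReal

private lemma designMono (ξ : ℕ → ℝ) (n : ℕ) (h : ∀ i ≤ n, ξ i < ξ (i + 1)) :
    ∀ j ≤ n + 1, ∀ i ≤ j, ξ i ≤ ξ j := by
  intro j
  induction j with
  | zero =>
    intro _ i hi
    obtain rfl : i = 0 := Nat.le_zero.mp hi
    exact le_refl _
  | succ j ih =>
    intro hj i hi
    rcases Nat.lt_succ_iff_lt_or_eq.mp (Nat.lt_succ_of_le hi) with hlt | heq
    · have h1 : ξ i ≤ ξ j := ih (by omega) i (by omega)
      have h2 : ξ j < ξ (j + 1) := h j (by omega)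
      linarith
    · subst heq; exact le_refl _

private lemma designPoint (ξ : ℕ → ℝ) (n : ℕ) (D s : ℝ)
    (h0 : ξ 0 = 0) (h1 : ξ (n + 1) = 1)
    (hgap : ∀ i ≤ n, ξ (i + 1) - ξ i ≤ D)
    (hDs : D ≤ s) (hD : 0 < D) (hs1 : s < 1) :
    1 ≤ Nat.findGreatest (fun i => ξ i ≤ s) n ∧ Nat.findGreatest (fun i => ξ i ≤ s) n ≤ n ∧
      s - D < ξ (Nat.findGreatest (fun i => ξ i ≤ s) n) ∧
      ξ (Nat.findGreatest (fun i => ξ i ≤ s) n) ≤ s := by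
  classical
  set P : ℕ → Prop := fun i => ξ i ≤ s with hP
  set q := Nat.findGreatest P n with hq
  have hs0 : (0 : ℝ) ≤ s := le_trans hD.le hDs
  have hP0 : P 0 := by rw [hP]; simpa [h0] using hs0
  have hqs : ξ q ≤ s := Nat.findGreatest_spec (Nat.zero_le n) hP0
  have hqn : q ≤ n := Nat.findGreatest_le n
  have hlow : s - D < ξ q := by
    rcases eq_or_lt_of_le hqn with hq_eq | hq_lt
    · have hg := hgap n le_rfl
      rw [h1] at hg
      rw [hq_eq]
      linarith
    · have hng : ¬ P (q + 1) := Nat.findGreatest_is_greatest (Nat.lt_succ_self q) (by omega)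
      have hgt : s < ξ (q + 1) := lt_of_not_ge hng
      have := hgap q hqn
      linarith
  have hq1 : 1 ≤ q := by
    by_contra hcon
    have hq0 : q = 0 := by omega
    rw [hq0, h0] at hlow
    linarith
  exact ⟨hq1, hqn, hlow, hqs⟩


set_option maxHeartbeats 2000000 in
/-- **Uniform consistency of the local constant boundary estimator (fixed design).**
Under assumptions (A1'), (A2'), (A3) and (A4'), the estimator
`h̃₀(x) = max{Λ₀(Y_{i,n}) : 1 ≤ i ≤ n, |x_{i,n} − x| ≤ b_n}` (computed in the extended
reals, so that `max ∅ = ⊥`) satisfies `sup_{x ∈ [0,1]} |h̃₀(x) − h₀(x)| = o_P(1)`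
as `n → ∞`.  (Here `|A − B|` is expressed in `EReal` as `max (A − B) (B − A)`.) -/
theorem boundary_estimator_uniform_consistency_fixed_design
    {Ω : Type} [MeasureSpace Ω] [IsProbabilityMeasure (ℙ : Measure Ω)]
    (Y ε : ℕ → ℕ → Ω → ℝ) (x : ℕ → ℕ → ℝ) (Λ₀ h₀ F₀ : ℝ → ℝ) (b : ℕ → ℝ) (Δ : ℕ → ℝ)
    -- Λ₀ is strictly increasing and continuous
    (hΛ₀mono : StrictMono Λ₀) (hΛ₀cont : Continuous Λ₀)
    -- (A2'): deterministic design points 0 = x_{0,n} < x_{1,n} < … < x_{n,n} < x_{n+1,n} = 1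
    (hx0 : ∀ n, x n 0 = 0) (hx1 : ∀ n, x n (n + 1) = 1)
    (hxmono : ∀ n, ∀ i ≤ n, x n i < x n (i + 1))
    -- Δ̄_n is the maximal spacing
    (hΔ : ∀ n, IsGreatest {d : ℝ | ∃ i ≤ n, d = x n (i + 1) - x n i} (Δ n))
    -- (A1'): model with independent errors with common cdf F₀, F₀(0) = 1,
    -- F₀(−Δ) < 1 for every Δ > 0
    (hmodel : ∀ n, ∀ i, 1 ≤ i → i ≤ n → ∀ ω, Λ₀ (Y n i ω) = h₀ (x n i) + ε n i ω)
    (hεmeas : ∀ n i, Measurable (ε n i))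
    (hεindep : ∀ n, iIndepFun (fun i : Fin n => ε n ((i : ℕ) + 1)) ℙ)
    (hεcdf : ∀ n, ∀ i, 1 ≤ i → i ≤ n → ∀ t : ℝ, (ℙ {ω | ε n i ω ≤ t}).toReal = F₀ t)
    (hF₀zero : F₀ 0 = 1)
    (hF₀lt : ∀ d : ℝ, 0 < d → F₀ (-d) < 1)
    -- (A3): h₀ continuous on [0,1]
    (hh₀ : ContinuousOn h₀ (Set.Icc 0 1))
    -- (A4'): b_n > 0, b_n → 0 and Δ̄_n (log n)/b_n → 0
    (hbpos : ∀ n, 0 < b n) (hb0 : Tendsto b atTop (𝓝 0))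
    (hblog : Tendsto (fun n : ℕ => Δ n * Real.log n / b n) atTop (𝓝 0)) :
    ∀ δ : ℝ, 0 < δ →
      Tendsto
        (fun n : ℕ => ℙ {ω : Ω |
          (δ : EReal) < ⨆ t : Set.Icc (0 : ℝ) 1,
            max
              ((⨆ i : {i : ℕ // 1 ≤ i ∧ i ≤ n ∧ |x n i - (t : ℝ)| ≤ b n},
                  ((Λ₀ (Y n (i : ℕ) ω) : ℝ) : EReal)) - ((h₀ t : ℝ) : EReal))
              (((h₀ t : ℝ) : EReal) -
                ⨆ i : {i : ℕ // 1 ≤ i ∧ i ≤ n ∧ |x n i - (t : ℝ)| ≤ b n},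
                  ((Λ₀ (Y n (i : ℕ) ω) : ℝ) : EReal))})
        atTop (𝓝 0) := by
  classical
  intro δ hδ
  -- uniform continuity of h₀ on [0,1]
  have hUC : UniformContinuousOn h₀ (Set.Icc 0 1) :=
    isCompact_Icc.uniformContinuousOn_of_continuous hh₀
  rw [Metric.uniformContinuousOn_iff] at hUC
  obtain ⟨η, hηpos, hmod⟩ := hUC (δ / 2) (half_pos hδ)
  set ρ : ℝ := F₀ (-(δ / 2)) with hρdef
  have hρ1 : ρ < 1 := hF₀lt _ (half_pos hδ)
  have hρ0 : (0:ℝ) ≤ ρ := by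
    rw [hρdef, ← hεcdf 1 1 le_rfl le_rfl (-(δ / 2))]
    exact ENNReal.toReal_nonneg
  -- global design facts
  have hΔpos : ∀ n, 0 < Δ n := by
    intro n
    obtain ⟨⟨i, hi, hd⟩, -⟩ := hΔ n
    have := hxmono n i hi
    rw [hd]
    linarith
  have hgapΔ : ∀ n, ∀ i ≤ n, x n (i + 1) - x n i ≤ Δ n := fun n i hi => (hΔ n).2 ⟨i, hi, rfl⟩
  have hΔsum : ∀ n : ℕ, (1:ℝ) ≤ ((n:ℝ) + 1) * Δ n := by
    intro n
    have htel : ∑ i ∈ Finset.range (n+1), (x n (i+1) - x n i) = 1 := by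
      rw [Finset.sum_range_sub, hx1 n, hx0 n]; ring
    have hle : ∑ i ∈ Finset.range (n+1), (x n (i+1) - x n i)
        ≤ ∑ _i ∈ Finset.range (n+1), Δ n :=
      Finset.sum_le_sum (fun i hi => hgapΔ n i (Nat.lt_succ_iff.mp (Finset.mem_range.mp hi)))
    rw [htel, Finset.sum_const, Finset.card_range, nsmul_eq_mul] at hle
    push_cast at hle ⊢
    linarith
  have hxmem : ∀ n i, i ≤ n + 1 → x n i ∈ Set.Icc (0:ℝ) 1 := by
    intro n i hi
    constructor
    · have h := designMono (x n) n (hxmono n) i hi 0 (Nat.zero_le i)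
      rw [hx0 n] at h; exact h
    · have h := designMono (x n) n (hxmono n) (n+1) le_rfl i hi
      rw [hx1 n] at h; exact h
  -- parameters
  set m : ℕ → ℕ := fun n => ⌊b n / (4 * Δ n)⌋₊ with hmdef
  set K : ℕ → ℕ := fun n => ⌈2 / b n⌉₊ with hKdef
  set G : ℕ → ℝ := fun n => ((K n : ℝ) + 1) * ρ ^ m n with hGdef
  set pp : ℕ → ℕ → ℕ → ℕ := fun n k j =>
    Nat.findGreatest (fun i => x n i ≤ (k : ℝ) * b n / 2 + ((j : ℝ) + 1) * Δ n) n with hppdef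
  have evlog : ∀ᶠ n : ℕ in atTop, (1:ℝ) ≤ Real.log n :=
    (Real.tendsto_log_atTop.comp tendsto_natCast_atTop_atTop).eventually_ge_atTop 1
  -- eventually `m n ≥ 1` and `4Δ ≤ b`
  have evΔb : ∀ᶠ n in atTop, 4 * Δ n ≤ b n := by
    filter_upwards [hblog.eventually_lt_const (by norm_num : (0:ℝ) < 1/4), evlog] with n hr hlog
    have hb := hbpos n
    have hΔp := hΔpos n
    rw [div_lt_iff₀ hb] at hr
    nlinarith
  have evm1 : ∀ᶠ n in atTop, 1 ≤ m n := by
    filter_upwards [evΔb] with n hΔb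
    have hb := hbpos n
    have hΔp := hΔpos n
    rw [hmdef]
    apply Nat.le_floor
    rw [Nat.cast_one, le_div_iff₀ (by positivity)]
    linarith
  -- Part 2: G → 0
  have hGto : Tendsto G atTop (𝓝 0) := by
    rcases eq_or_lt_of_le hρ0 with hρz | hρpos
    · -- ρ = 0
      have hev : ∀ᶠ n in atTop, G n = 0 := by
        filter_upwards [evm1] with n hm1
        rw [hGdef]
        simp only
        rw [← hρz, zero_pow (by omega), mul_zero]
      exact Tendsto.congr' (by filter_upwards [hev] with n h using h.symm) tendsto_const_nhds
    · -- 0 < ρ < 1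
      have hlρ : Real.log ρ < 0 := Real.log_neg hρpos hρ1
      set c₀ : ℝ := min (1/4) (-Real.log ρ / 8) with hc₀
      have hc₀pos : 0 < c₀ := lt_min (by norm_num) (by linarith)
      refine squeeze_zero' ?_ ?_ (tendsto_const_div_atTop_nhds_zero_nat (4 / ρ))
      · exact Eventually.of_forall fun n =>
          mul_nonneg (by positivity) (pow_nonneg hρ0 _)
      · filter_upwards [hblog.eventually_lt_const hc₀pos, evlog, eventually_ge_atTop 1,
          hb0.eventually_lt_const (by norm_num : (0:ℝ) < 1)] with n hr hlog hn1 hb1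
        have hb := hbpos n
        have hΔp := hΔpos n
        have hnR : (1:ℝ) ≤ (n:ℝ) := by exact_mod_cast hn1
        have hΔlog : Δ n * Real.log n ≤ c₀ * b n := by
          rw [div_lt_iff₀ hb] at hr; linarith
        have hc14 : c₀ ≤ 1/4 := min_le_left _ _
        have hc8 : 8 * c₀ ≤ -Real.log ρ := by
          have := min_le_right (1/4 : ℝ) (-Real.log ρ / 8)
          rw [hc₀]; linarith [this]
        have hnb : 1 ≤ (n:ℝ) * b n := by
          have h1 : (1:ℝ) ≤ ((n:ℝ)+1) * Δ n := hΔsum n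
          nlinarith
        have hK4 : (K n : ℝ) + 1 ≤ 4 * n := by
          have h1 : (K n : ℝ) < 2 / b n + 1 := Nat.ceil_lt_add_one (by positivity)
          have h2 : 2 / b n ≤ 2 * n := by rw [div_le_iff₀ hb]; nlinarith
          have h3 : (2:ℝ) ≤ 2 / b n := by
            rw [le_div_iff₀ hb]
            linarith
          linarith
        have hmlb : Real.log n / (4 * c₀) ≤ (m n : ℝ) + 1 := by
          have h1 : b n / (4 * Δ n) < (m n:ℝ) + 1 := Nat.lt_floor_add_one _
          have h2 : Real.log n / (4 * c₀) ≤ b n / (4 * Δ n) := by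
            rw [div_le_div_iff₀ (by positivity) (by positivity)]
            nlinarith
          linarith
        have hexp : ((m n:ℝ)+1) * Real.log ρ + 2 * Real.log n ≤ 0 := by
          have h1 : (Real.log n / (4*c₀)) * (-Real.log ρ) ≤ ((m n:ℝ)+1) * (-Real.log ρ) :=
            mul_le_mul_of_nonneg_right hmlb (by linarith)
          have h3 : Real.log n / (4 * c₀) * (8 * c₀) = 2 * Real.log n := by
            field_simp; ring
          have hlogn0 : 0 ≤ Real.log n / (4 * c₀) := by positivity
          have h2 : 2 * Real.log n ≤ (Real.log n / (4*c₀)) * (-Real.log ρ) := by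
            rw [← h3]
            exact mul_le_mul_of_nonneg_left hc8 hlogn0
          linarith
        have hkey : ρ ^ (m n + 1) * (n:ℝ)^2 ≤ 1 := by
          have e1 : ρ ^ (m n + 1) = Real.exp (((m n:ℝ)+1) * Real.log ρ) := by
            rw [show ((m n:ℝ)+1) = ((m n + 1 : ℕ):ℝ) by push_cast; ring,
              Real.exp_nat_mul, Real.exp_log hρpos]
          have e2 : ((n:ℝ))^2 = Real.exp (2 * Real.log n) := by
            rw [show (2:ℝ) * Real.log n = ((2:ℕ):ℝ) * Real.log n by norm_num,
              Real.exp_nat_mul, Real.exp_log (by linarith)]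
          rw [e1, e2, ← Real.exp_add]
          exact Real.exp_le_one_iff.mpr hexp
        have hρm : ρ ^ m n ≤ 1 / (ρ * (n:ℝ)^2) := by
          rw [le_div_iff₀ (by positivity)]
          calc ρ ^ m n * (ρ * (n:ℝ)^2) = ρ^(m n + 1) * (n:ℝ)^2 := by ring
            _ ≤ 1 := hkey
        calc G n = ((K n:ℝ)+1) * ρ ^ m n := rfl
          _ ≤ (4 * n) * (1 / (ρ * (n:ℝ)^2)) :=
            mul_le_mul hK4 hρm (pow_nonneg hρ0 _) (by positivity)
          _ = 4 / ρ / n := by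
            field_simp
  -- conclusion via squeeze
  have h0' : Tendsto (fun n => ENNReal.ofReal (G n)) atTop (𝓝 0) := by
    have := ENNReal.tendsto_ofReal hGto
    simpa using this
  refine tendsto_of_tendsto_of_tendsto_of_le_of_le' tendsto_const_nhds h0'
    (Eventually.of_forall fun n => zero_le) ?_
  filter_upwards [hb0.eventually_lt_const (lt_min hηpos one_pos), evΔb, evm1]
    with n hbn hΔb hm1
  have hb := hbpos n
  have hΔp := hΔpos n
  have hbη : b n < η := lt_of_lt_of_le hbn (min_le_left _ _)
  have hb1 : b n ≤ 1 := le_of_lt (lt_of_lt_of_le hbn (min_le_right _ _))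
  set E : Set Ω := {ω : Ω |
      (δ : EReal) < ⨆ t : Set.Icc (0 : ℝ) 1,
        max
          ((⨆ i : {i : ℕ // 1 ≤ i ∧ i ≤ n ∧ |x n i - (t : ℝ)| ≤ b n},
              ((Λ₀ (Y n (i : ℕ) ω) : ℝ) : EReal)) - ((h₀ t : ℝ) : EReal))
          (((h₀ t : ℝ) : EReal) -
            ⨆ i : {i : ℕ // 1 ≤ i ∧ i ≤ n ∧ |x n i - (t : ℝ)| ≤ b n},
              ((Λ₀ (Y n (i : ℕ) ω) : ℝ) : EReal))} with hE
  show ℙ E ≤ ENNReal.ofReal (G n)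
  set c : ℝ := -(δ/2) with hc
  set U : Set Ω := ⋃ i ∈ Finset.Icc 1 n, {ω | 0 < ε n i ω} with hUdef
  set Bad : ℕ → Set Ω := fun k => ⋂ j ∈ Finset.range (m n), {ω : Ω | ε n (pp n k j) ω ≤ c}
    with hBaddef
  set S : Finset ℕ :=
    (Finset.range (K n + 1)).filter (fun k => (k:ℝ) * b n / 2 ≤ 1 - b n / 2) with hSdef
  -- basic quantitative facts
  have hmΔ : (m n : ℝ) * Δ n ≤ b n / 4 := by
    have hfl : (m n : ℝ) ≤ b n / (4 * Δ n) := by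
      rw [hmdef]; exact Nat.floor_le (by positivity)
    have := mul_le_mul_of_nonneg_right hfl hΔp.le
    calc (m n : ℝ) * Δ n ≤ (b n / (4 * Δ n)) * Δ n := this
      _ = b n / 4 := by field_simp
  -- design point properties
  have hq : ∀ k ∈ S, ∀ j < m n,
      1 ≤ pp n k j ∧ pp n k j ≤ n ∧
      (k:ℝ) * b n / 2 + (j:ℝ) * Δ n < x n (pp n k j) ∧
      x n (pp n k j) ≤ (k:ℝ) * b n / 2 + ((j:ℝ) + 1) * Δ n := by
    intro k hk j hj
    have hkS : (k:ℝ) * b n / 2 ≤ 1 - b n / 2 := by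
      have := (Finset.mem_filter.mp hk).2
      simpa using this
    have hu0 : (0:ℝ) ≤ (k:ℝ) * b n / 2 := by positivity
    have hjm : ((j:ℝ) + 1) ≤ (m n : ℝ) := by exact_mod_cast hj
    have hjΔ : ((j:ℝ)+1) * Δ n ≤ b n / 4 :=
      le_trans (mul_le_mul_of_nonneg_right hjm hΔp.le) hmΔ
    have hs1 : (k:ℝ) * b n / 2 + ((j:ℝ)+1) * Δ n < 1 := by linarith
    have hDs : Δ n ≤ (k:ℝ) * b n / 2 + ((j:ℝ)+1) * Δ n := by nlinarith [(Nat.cast_nonneg j : (0:ℝ) ≤ (j:ℝ))]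
    have hdp := designPoint (x n) n (Δ n) ((k:ℝ) * b n / 2 + ((j:ℝ)+1) * Δ n)
      (hx0 n) (hx1 n) (hgapΔ n) hDs hΔp hs1
    simp only [hppdef]
    refine ⟨hdp.1, hdp.2.1, ?_, hdp.2.2.2⟩
    have := hdp.2.2.1
    linarith
  -- strict monotonicity of pp in j
  have hpmono : ∀ k ∈ S, ∀ j j', j < j' → j' < m n → pp n k j < pp n k j' := by
    intro k hk j j' hjj hj'
    obtain ⟨h1, h2, h3, h4⟩ := hq k hk j (lt_trans hjj hj')
    obtain ⟨h1', h2', h3', h4'⟩ := hq k hk j' hj'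
    have hcast : ((j:ℝ) + 1) ≤ (j' : ℝ) := by exact_mod_cast hjj
    have hx_lt : x n (pp n k j) < x n (pp n k j') := by nlinarith
    by_contra hcon
    push_neg at hcon
    have := designMono (x n) n (hxmono n) (pp n k j) (by omega) (pp n k j') hcon
    linarith
  -- ℙ U = 0
  have hUzero : ℙ U = 0 := by
    rw [hUdef]
    refine le_antisymm (le_trans (measure_biUnion_finset_le _ _)
      (le_of_eq (Finset.sum_eq_zero ?_))) zero_le
    intro i hi
    obtain ⟨hi1, hin⟩ := Finset.mem_Icc.mp hi
    have hmeas : MeasurableSet {ω | ε n i ω ≤ 0} := measurableSet_le (hεmeas n i) measurable_const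
    have h1 : ℙ {ω | ε n i ω ≤ 0} = 1 := by
      have ht : (ℙ {ω | ε n i ω ≤ 0}).toReal = 1 := by rw [hεcdf n i hi1 hin 0, hF₀zero]
      have h2 := ENNReal.ofReal_toReal (measure_ne_top ℙ {ω | ε n i ω ≤ 0})
      rw [ht] at h2
      simpa using h2.symm
    have hcompl : {ω : Ω | 0 < ε n i ω} = {ω : Ω | ε n i ω ≤ 0}ᶜ := by
      ext ω; simp [not_le]
    rw [hcompl, measure_compl hmeas (measure_ne_top _ _), h1, measure_univ, tsub_self]
  -- n ≥ 1
  have h0S : (0:ℕ) ∈ S := by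
    rw [hSdef, Finset.mem_filter, Finset.mem_range]
    constructor
    · omega
    · push_cast; linarith
  have hn1 : 1 ≤ n := by
    obtain ⟨h1, h2, -, -⟩ := hq 0 h0S 0 hm1
    omega
  -- ℙ (Bad k) ≤ ofReal (ρ ^ m n)
  have hBadP : ∀ k ∈ S, ℙ (Bad k) ≤ ENNReal.ofReal (ρ ^ m n) := by
    intro k hk
    set φ : ℕ → Fin n := fun j =>
      ⟨min (pp n k j - 1) (n - 1), lt_of_le_of_lt (min_le_right _ _) (Nat.sub_lt hn1 one_pos)⟩
      with hφdef
    have hφval : ∀ j < m n, (φ j : ℕ) + 1 = pp n k j := by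
      intro j hj
      obtain ⟨h1, h2, -, -⟩ := hq k hk j hj
      simp only [hφdef]
      rw [min_eq_left (by omega)]
      omega
    have hφinj : Set.InjOn φ (Finset.range (m n)) := by
      intro j hj j' hj' heq
      simp only [Finset.coe_range, Set.mem_Iio] at hj hj'
      by_contra hne
      rcases lt_or_gt_of_ne hne with h | h
      · have h2 := hpmono k hk j j' h hj'
        have h3 : (φ j : ℕ) + 1 = (φ j' : ℕ) + 1 := by rw [heq]
        rw [hφval j hj, hφval j' hj'] at h3
        omega
      · have h2 := hpmono k hk j' j h hj
        have h3 : (φ j : ℕ) + 1 = (φ j' : ℕ) + 1 := by rw [heq]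
        rw [hφval j hj, hφval j' hj'] at h3
        omega
    set T : Finset (Fin n) := (Finset.range (m n)).image φ with hTdef
    have hcard : T.card = m n := by
      rw [hTdef, Finset.card_image_of_injOn hφinj, Finset.card_range]
    have hset : Bad k = ⋂ i ∈ T, (fun ω => ε n ((i:ℕ) + 1) ω) ⁻¹' Set.Iic c := by
      rw [hBaddef, hTdef]
      ext ω
      simp only [Set.mem_iInter, Finset.mem_image, Finset.mem_range, Set.mem_preimage,
        Set.mem_Iic, Set.mem_setOf_eq]
      constructor
      · rintro h i ⟨j, hj, rfl⟩
        have := h j hj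
        rw [← hφval j hj] at this
        exact this
      · intro h j hj
        have := h (φ j) ⟨j, hj, rfl⟩
        rw [hφval j hj] at this
        exact this
    have hind := iIndepFun_iff_measure_inter_preimage_eq_mul.mp (hεindep n) T
      (sets := fun _ => Set.Iic c) (fun i _ => measurableSet_Iic)
    rw [hset, hind]
    have hone : ∀ i ∈ T, ℙ ((fun ω => ε n ((i:ℕ)+1) ω) ⁻¹' Set.Iic c) = ENNReal.ofReal ρ := by
      intro i _
      have hi1 : 1 ≤ (i:ℕ) + 1 := Nat.le_add_left 1 i
      have hin : (i:ℕ) + 1 ≤ n := i.isLt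
      have ht := hεcdf n ((i:ℕ)+1) hi1 hin c
      have hpre : (fun ω => ε n ((i:ℕ)+1) ω) ⁻¹' Set.Iic c = {ω | ε n ((i:ℕ)+1) ω ≤ c} := rfl
      rw [hpre, ← ENNReal.ofReal_toReal (measure_ne_top ℙ _), ht, hρdef, hc]
    rw [Finset.prod_congr rfl hone, Finset.prod_const, hcard, ← ENNReal.ofReal_pow hρ0]
  -- containment
  have hsub : E ⊆ U ∪ ⋃ k ∈ S, Bad k := by
    intro ω hω
    by_contra hnot
    simp only [Set.mem_union, not_or] at hnot
    obtain ⟨hnU, hnB⟩ := hnot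
    have hεle : ∀ i, 1 ≤ i → i ≤ n → ε n i ω ≤ 0 := by
      intro i h1 h2
      by_contra hpos
      exact hnU (Set.mem_iUnion₂.mpr ⟨i, Finset.mem_Icc.mpr ⟨h1, h2⟩,
        lt_of_not_ge hpos⟩)
    have hεgt : ∀ k ∈ S, ∃ j < m n, c < ε n (pp n k j) ω := by
      intro k hk
      by_contra hcon
      push_neg at hcon
      refine hnB (Set.mem_iUnion₂.mpr ⟨k, hk, ?_⟩)
      rw [hBaddef]
      simp only [Set.mem_iInter, Finset.mem_range, Set.mem_setOf_eq]
      exact fun j hj => hcon j hj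
    rw [hE, Set.mem_setOf_eq] at hω
    refine absurd hω (not_lt.mpr (iSup_le ?_))
    rintro ⟨t, ht0, ht1⟩
    set a : ℝ := min t (1 - b n) with hadef
    have ha0 : 0 ≤ a := le_min ht0 (by linarith)
    have ha1 : a ≤ 1 - b n := min_le_right _ _
    have hat : a ≤ t := min_le_left _ _
    have hta : t ≤ a + b n := by
      rcases le_total t (1 - b n) with h | h
      · rw [hadef, min_eq_left h]; linarith
      · rw [hadef, min_eq_right h]; linarith
    set k : ℕ := ⌈2 * a / b n⌉₊ with hkd
    have hkc : (k:ℝ) < 2 * a / b n + 1 := Nat.ceil_lt_add_one (by positivity)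
    have hkl : 2 * a / b n ≤ (k:ℝ) := Nat.le_ceil _
    have hub : (k:ℝ) * b n / 2 < a + b n / 2 := by
      have h2 : (k:ℝ) * b n < (2 * a / b n + 1) * b n :=
        mul_lt_mul_of_pos_right hkc hb
      rw [add_mul, div_mul_cancel₀ _ (ne_of_gt hb), one_mul] at h2
      linarith
    have hlb : a ≤ (k:ℝ) * b n / 2 := by
      have h2 : 2 * a ≤ (k:ℝ) * b n := by
        have := (div_le_iff₀ hb).mp hkl
        linarith
      linarith
    have hkK : k ≤ K n := by
      rw [hkd, hKdef]
      apply Nat.ceil_le_ceil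
      have h2a : 2 * a ≤ 2 := by linarith [le_trans hat ht1]
      rw [div_le_div_iff₀ hb hb]
      nlinarith
    have hkS : k ∈ S := by
      rw [hSdef, Finset.mem_filter, Finset.mem_range]
      exact ⟨Nat.lt_succ_of_le hkK, by linarith⟩
    obtain ⟨j, hjm, hεj⟩ := hεgt k hkS
    obtain ⟨hq1, hqn, hqlo, hqhi⟩ := hq k hkS j hjm
    have hjΔ : ((j:ℝ)+1) * Δ n ≤ b n / 4 := by
      have hjm' : ((j:ℝ)+1) ≤ (m n:ℝ) := by exact_mod_cast hjm
      exact le_trans (mul_le_mul_of_nonneg_right hjm' hΔp.le) hmΔ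
    have hjΔ0 : (0:ℝ) ≤ (j:ℝ) * Δ n :=
      mul_nonneg (Nat.cast_nonneg j) hΔp.le
    have hxqa : a ≤ x n (pp n k j) := by linarith
    have hxqb : x n (pp n k j) ≤ a + b n := by linarith
    have hqwin : |x n (pp n k j) - t| ≤ b n := abs_le.mpr ⟨by linarith, by linarith⟩
    have hxq01 : x n (pp n k j) ∈ Set.Icc (0:ℝ) 1 := hxmem n (pp n k j) (by omega)
    have ht01 : t ∈ Set.Icc (0:ℝ) 1 := ⟨ht0, ht1⟩
    have hmodq : |h₀ (x n (pp n k j)) - h₀ t| ≤ δ / 2 := by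
      have hd := hmod (x n (pp n k j)) hxq01 t ht01
        (by rw [Real.dist_eq]; exact lt_of_le_of_lt hqwin hbη)
      rw [Real.dist_eq] at hd
      exact hd.le
    have hAle : (⨆ i : {i : ℕ // 1 ≤ i ∧ i ≤ n ∧ |x n i - t| ≤ b n},
        ((Λ₀ (Y n (i:ℕ) ω) : ℝ) : EReal)) ≤ ((h₀ t + δ/2 : ℝ) : EReal) := by
      refine iSup_le ?_
      rintro ⟨i, hi1, hin, hiw⟩
      rw [EReal.coe_le_coe_iff, hmodel n i hi1 hin ω]
      have hxi01 : x n i ∈ Set.Icc (0:ℝ) 1 := hxmem n i (by omega)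
      have h5 : |h₀ (x n i) - h₀ t| ≤ δ/2 := by
        have hd := hmod (x n i) hxi01 t ht01
          (by rw [Real.dist_eq]; exact lt_of_le_of_lt hiw hbη)
        rw [Real.dist_eq] at hd
        exact hd.le
      have h6 := hεle i hi1 hin
      have h7 := abs_le.mp h5
      linarith [h7.1, h7.2]
    have hAge : ((h₀ t - δ : ℝ) : EReal) ≤
        ⨆ i : {i : ℕ // 1 ≤ i ∧ i ≤ n ∧ |x n i - t| ≤ b n},
          ((Λ₀ (Y n (i:ℕ) ω) : ℝ) : EReal) := by
      refine le_trans ?_ (le_iSup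
        (fun i : {i : ℕ // 1 ≤ i ∧ i ≤ n ∧ |x n i - t| ≤ b n} =>
          ((Λ₀ (Y n (i:ℕ) ω) : ℝ) : EReal)) ⟨pp n k j, hq1, hqn, hqwin⟩)
      rw [EReal.coe_le_coe_iff, hmodel n (pp n k j) hq1 hqn ω]
      have h7 := abs_le.mp hmodq
      have h8 : -(δ/2) < ε n (pp n k j) ω := hεj
      linarith [h7.1, h7.2]
    refine max_le ?_ ?_
    · refine le_trans (EReal.sub_le_sub hAle (le_refl ((h₀ t : ℝ) : EReal))) ?_
      rw [← EReal.coe_sub]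
      rw [EReal.coe_le_coe_iff]
      linarith
    · refine le_trans (EReal.sub_le_sub (le_refl ((h₀ t : ℝ) : EReal)) hAge) ?_
      rw [← EReal.coe_sub]
      rw [EReal.coe_le_coe_iff]
      linarith
  -- combine
  have hcardS : S.card ≤ K n + 1 := by
    rw [hSdef]
    exact le_trans (Finset.card_filter_le _ _) (le_of_eq (Finset.card_range _))
  calc ℙ E ≤ ℙ (U ∪ ⋃ k ∈ S, Bad k) := measure_mono hsub
    _ ≤ ℙ U + ℙ (⋃ k ∈ S, Bad k) := measure_union_le _ _
    _ ≤ 0 + ∑ k ∈ S, ℙ (Bad k) := by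
        rw [hUzero]
        exact add_le_add (le_refl 0) (measure_biUnion_finset_le _ _)
    _ ≤ ∑ k ∈ S, ENNReal.ofReal (ρ ^ m n) := by
        rw [zero_add]
        exact Finset.sum_le_sum hBadP
    _ = S.card • ENNReal.ofReal (ρ ^ m n) := Finset.sum_const _
    _ ≤ (K n + 1) • ENNReal.ofReal (ρ ^ m n) := by
        rw [nsmul_eq_mul, nsmul_eq_mul]
        exact mul_le_mul_left (by exact_mod_cast hcardS) _
    _ = ENNReal.ofReal (G n) := by
        rw [hGdef]
        simp only
        rw [ENNReal.ofReal_mul (by positivity), nsmul_eq_mul]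
        congr 1
        rw [show ((K n:ℝ)+1) = ((K n + 1 : ℕ):ℝ) by push_cast; ring, ENNReal.ofReal_natCast]
end

section
/- Uniform smallness of the nearest error (fixed design): under assumptions (A1'), (A2') and (A4'), sup_{x∈[0,1]} min{|ε_{i,n}| : 1 ≤ i ≤ n, |x_{i,n} − x| ≤ b_n} = o_P(1), where the minimum over an empty index set is interpreted as +∞; i.e. for every δ > 0, P(sup_{x∈[0,1]} min_{i : |x_{i,n}−x| ≤ b_n} |ε_{i,n}| > δ) → 0 as n → ∞. -/
open MeasureTheory ProbabilityTheory Filter Topology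
open scoped ENNReal

lemma NE_xlt {n : ℕ} {x : ℕ → ℝ} (hxmono : ∀ i ≤ n, x i < x (i + 1)) :
    ∀ j, j ≤ n + 1 → ∀ i, i < j → x i < x j := by
  intro j hj
  induction j with
  | zero => omega
  | succ k ih =>
    intro i hi
    rcases Nat.lt_succ_iff_lt_or_eq.mp hi with h | h
    · exact lt_trans (ih (by omega) i h) (hxmono k (by omega))
    · subst h; exact hxmono i (by omega)

lemma NE_nearby {n : ℕ} {x : ℕ → ℝ} {D t : ℝ}
    (hn : 1 ≤ n) (hx0 : x 0 = 0) (hx1 : x (n + 1) = 1)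
    (hxmono : ∀ i ≤ n, x i < x (i + 1))
    (hgap : ∀ i ≤ n, x (i + 1) - x i ≤ D)
    (ht0 : 0 ≤ t) (ht1 : t ≤ 1) :
    ∃ j, 1 ≤ j ∧ j ≤ n ∧ |x j - t| ≤ D := by
  classical
  have hD0 : 0 < D := lt_of_lt_of_le (sub_pos.mpr (hxmono 0 (Nat.zero_le n))) (hgap 0 (Nat.zero_le n))
  have hSne : ((Finset.range (n+2)).filter (fun i => x i ≤ t)).Nonempty :=
    ⟨0, by simp [hx0, ht0]⟩
  obtain ⟨j0, hj0mem, hmax⟩ :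
      ∃ j0, j0 ∈ (Finset.range (n+2)).filter (fun i => x i ≤ t) ∧
        ∀ i ∈ (Finset.range (n+2)).filter (fun i => x i ≤ t), i ≤ j0 :=
    ⟨_, Finset.max'_mem _ hSne, fun i hi => Finset.le_max' _ i hi⟩
  simp only [Finset.mem_filter, Finset.mem_range] at hj0mem
  by_cases hcase : j0 ≤ n
  · have hnot : ¬ (j0 + 1 ∈ (Finset.range (n+2)).filter (fun i => x i ≤ t)) :=
      fun h => by have := hmax _ h; omega
    have hgt : t < x (j0 + 1) := by
      by_contra h
      exact hnot (by simp only [Finset.mem_filter, Finset.mem_range]; exact ⟨by omega, not_lt.mp h⟩)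
    have hg := hgap j0 hcase
    by_cases h1 : 1 ≤ j0
    · exact ⟨j0, h1, hcase, by rw [abs_le]; constructor <;> linarith [hj0mem.2]⟩
    · have hj00 : j0 = 0 := by omega
      have hnot1 : ¬ (1 ∈ (Finset.range (n+2)).filter (fun i => x i ≤ t)) :=
        fun h => by have := hmax _ h; omega
      have hgt1 : t < x 1 := by
        by_contra h
        exact hnot1 (by simp only [Finset.mem_filter, Finset.mem_range]; exact ⟨by omega, not_lt.mp h⟩)
      have hg0 := hgap 0 (Nat.zero_le n)
      refine ⟨1, le_rfl, hn, ?_⟩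
      rw [abs_le]; constructor <;> linarith [hx0]
  · have hj0n : j0 = n + 1 := by omega
    have hxle : x (n+1) ≤ t := by rw [← hj0n]; exact hj0mem.2
    have ht : t = 1 := le_antisymm ht1 (by rw [← hx1]; exact hxle)
    have hg := hgap n le_rfl
    have hlt : x n < x (n+1) := hxmono n le_rfl
    refine ⟨n, hn, le_rfl, ?_⟩
    rw [ht, abs_le]; constructor <;> [linarith [hx1]; linarith [hx1]]

lemma NE_count {n M : ℕ} {x : ℕ → ℝ} {D u : ℝ}
    (hx0 : x 0 = 0) (hx1 : x (n + 1) = 1)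
    (hgap : ∀ i ≤ n, x (i + 1) - x i ≤ D)
    (hD : 0 < D) (hu : 0 ≤ u) (huv : u + ((M : ℝ) + 1) * D ≤ 1) :
    M ≤ ((Finset.Icc 1 n).filter
        (fun i => u < x i ∧ x i ≤ u + ((M : ℝ) + 1) * D)).card := by
  classical
  have key : ∀ k : ℕ, ∃ j, k < M →
      1 ≤ j ∧ j ≤ n ∧ u + k * D < x j ∧ x j ≤ u + ((k : ℝ) + 1) * D := by
    intro k
    by_cases hk : k < M
    swap
    · exact ⟨0, fun h => absurd h hk⟩
    have hkD : (0:ℝ) ≤ k * D := by positivity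
    have hkM : (k : ℝ) + 1 ≤ (M : ℝ) := by exact_mod_cast hk
    have hSne : ((Finset.range (n+2)).filter (fun i => x i ≤ u + k * D)).Nonempty :=
      ⟨0, by simp only [Finset.mem_filter, Finset.mem_range]; exact ⟨by omega, by rw [hx0]; linarith⟩⟩
    obtain ⟨g, hgmem, hgmax⟩ :
        ∃ g, g ∈ (Finset.range (n+2)).filter (fun i => x i ≤ u + k * D) ∧
          ∀ i ∈ (Finset.range (n+2)).filter (fun i => x i ≤ u + k * D), i ≤ g :=
      ⟨_, Finset.max'_mem _ hSne, fun i hi => Finset.le_max' _ i hi⟩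
    simp only [Finset.mem_filter, Finset.mem_range] at hgmem
    have hgn : g ≤ n := by
      rcases Nat.lt_succ_iff_lt_or_eq.mp (by omega : g < n + 2) with h | h
      · omega
      · exfalso
        have : x (n+1) ≤ u + k * D := h ▸ hgmem.2
        rw [hx1] at this
        nlinarith
    have hnot : ¬ (g + 1 ∈ (Finset.range (n+2)).filter (fun i => x i ≤ u + k * D)) :=
      fun h => by have := hgmax _ h; omega
    have hgt : u + k * D < x (g + 1) := by
      by_contra h
      exact hnot (by simp only [Finset.mem_filter, Finset.mem_range]
                     exact ⟨by omega, not_lt.mp h⟩)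
    have hub : x (g + 1) ≤ u + ((k : ℝ) + 1) * D := by
      have := hgap g hgn
      have := hgmem.2
      nlinarith
    have hgn' : g + 1 ≤ n := by
      rcases Nat.lt_or_ge (g+1) (n+1) with h | h
      · omega
      · exfalso
        have hgeq : g + 1 = n + 1 := by omega
        have : x (g + 1) = 1 := by rw [hgeq, hx1]
        nlinarith
    exact ⟨g + 1, fun _ => ⟨by omega, hgn', hgt, hub⟩⟩
  choose f hf using key
  have hmaps : ∀ k ∈ Finset.range M, f k ∈ (Finset.Icc 1 n).filter
      (fun i => u < x i ∧ x i ≤ u + ((M : ℝ) + 1) * D) := by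
    intro k hk
    have hkM := Finset.mem_range.mp hk
    obtain ⟨h1, h2, h3, h4⟩ := hf k hkM
    have hkD : (0:ℝ) ≤ k * D := by positivity
    have hkM' : (k : ℝ) + 1 ≤ (M : ℝ) := by exact_mod_cast hkM
    simp only [Finset.mem_filter, Finset.mem_Icc]
    refine ⟨⟨h1, h2⟩, by linarith, by nlinarith⟩
  have hkey : ∀ a b, a < M → b < M → a < b → f a ≠ f b := by
    intro a b ha hb hlt hab
    obtain ⟨_, _, ha3, ha4⟩ := hf a ha
    obtain ⟨_, _, hb3, hb4⟩ := hf b hb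
    have hcast : (a : ℝ) + 1 ≤ (b : ℝ) := by exact_mod_cast hlt
    have hx : x (f a) < x (f b) := by nlinarith
    rw [hab] at hx
    exact lt_irrefl _ hx
  have hinj : Set.InjOn f (Finset.range M) := by
    intro a ha b hb hab
    simp only [Finset.coe_range, Set.mem_Iio] at ha hb
    rcases lt_trichotomy a b with h | h | h
    · exact absurd hab (hkey a b ha hb h)
    · exact h
    · exact absurd hab.symm (hkey b a hb ha h)
  calc M = (Finset.range M).card := (Finset.card_range M).symm
  _ ≤ _ := Finset.card_le_card_of_injOn f hmaps hinj

lemma NE_single {Ω : Type} [MeasureSpace Ω] [IsProbabilityMeasure (ℙ : Measure Ω)]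
    {e : Ω → ℝ} (he : Measurable e) {δ q : ℝ}
    (h0 : (ℙ {ω | e ω ≤ 0}).toReal = 1)
    (hq : (ℙ {ω | e ω ≤ -δ}).toReal = q) :
    ℙ {ω | δ < |e ω|} ≤ ENNReal.ofReal q := by
  have hms : MeasurableSet {ω | e ω ≤ (0:ℝ)} := measurableSet_le he measurable_const
  have h0' : ℙ {ω | e ω ≤ (0:ℝ)} = 1 := by
    rw [← ENNReal.ofReal_toReal (measure_ne_top ℙ _), h0]; simp
  have hpos : ℙ {ω | 0 < e ω} = 0 := by
    have : {ω | 0 < e ω} = {ω | e ω ≤ (0:ℝ)}ᶜ := by ext ω; simp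
    rw [this, measure_compl hms (measure_ne_top ℙ _), h0', measure_univ, tsub_self]
  have hsub : {ω | δ < |e ω|} ⊆ {ω | e ω ≤ -δ} ∪ {ω | 0 < e ω} := by
    intro ω h
    simp only [Set.mem_setOf_eq] at h
    rcases le_or_gt (e ω) 0 with h1 | h1
    · left
      simp only [Set.mem_setOf_eq]
      rw [abs_of_nonpos h1] at h
      linarith
    · right; exact h1
  calc ℙ {ω | δ < |e ω|} ≤ ℙ ({ω | e ω ≤ -δ} ∪ {ω | 0 < e ω}) := measure_mono hsub
  _ ≤ ℙ {ω | e ω ≤ -δ} + ℙ {ω | 0 < e ω} := measure_union_le _ _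
  _ = ℙ {ω | e ω ≤ -δ} := by rw [hpos, add_zero]
  _ = ENNReal.ofReal q := by rw [← hq, ENNReal.ofReal_toReal (measure_ne_top ℙ _)]
set_option maxHeartbeats 1600000 in
/-- **Uniform smallness of the nearest error (fixed design).**
Under assumptions (A1'), (A2') and (A4'),
`sup_{x ∈ [0,1]} min{|ε_{i,n}| : 1 ≤ i ≤ n, |x_{i,n} − x| ≤ b_n} = o_P(1)`, the minimum
over an empty index set being `+∞` (the infimum is taken in `ℝ≥0∞`, so `⨅` over an
empty index type is `⊤`):  for every `δ > 0`,
`P(sup_{x ∈ [0,1]} min_{i : |x_{i,n} − x| ≤ b_n} |ε_{i,n}| > δ) → 0` as `n → ∞`. -/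
theorem nearest_error_uniformly_small_fixed_design
    {Ω : Type} [MeasureSpace Ω] [IsProbabilityMeasure (ℙ : Measure Ω)]
    (ε : ℕ → ℕ → Ω → ℝ) (x : ℕ → ℕ → ℝ) (F₀ : ℝ → ℝ) (b : ℕ → ℝ) (Δ : ℕ → ℝ)
    -- (A2'): deterministic design points 0 = x_{0,n} < x_{1,n} < … < x_{n,n} < x_{n+1,n} = 1
    (hx0 : ∀ n, x n 0 = 0) (hx1 : ∀ n, x n (n + 1) = 1)
    (hxmono : ∀ n, ∀ i ≤ n, x n i < x n (i + 1))
    -- Δ̄_n is the maximal spacing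
    (hΔ : ∀ n, IsGreatest {d : ℝ | ∃ i ≤ n, d = x n (i + 1) - x n i} (Δ n))
    -- (A1'): independent errors with common cdf F₀, F₀(0) = 1, F₀(−Δ) < 1 for Δ > 0
    (hεmeas : ∀ n i, Measurable (ε n i))
    (hεindep : ∀ n, iIndepFun (fun i : Fin n => ε n ((i : ℕ) + 1)) ℙ)
    (hεcdf : ∀ n, ∀ i, 1 ≤ i → i ≤ n → ∀ t : ℝ, (ℙ {ω | ε n i ω ≤ t}).toReal = F₀ t)
    (hF₀zero : F₀ 0 = 1)
    (hF₀lt : ∀ d : ℝ, 0 < d → F₀ (-d) < 1)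
    -- (A4'): b_n > 0, b_n → 0 and Δ̄_n (log n)/b_n → 0
    (hbpos : ∀ n, 0 < b n) (hb0 : Tendsto b atTop (𝓝 0))
    (hblog : Tendsto (fun n : ℕ => Δ n * Real.log n / b n) atTop (𝓝 0)) :
    ∀ δ : ℝ, 0 < δ →
      Tendsto
        (fun n : ℕ => ℙ {ω : Ω |
          ENNReal.ofReal δ < ⨆ t : Set.Icc (0 : ℝ) 1,
            ⨅ i : {i : ℕ // 1 ≤ i ∧ i ≤ n ∧ |x n i - (t : ℝ)| ≤ b n},
              ENNReal.ofReal |ε n (i : ℕ) ω|})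
        atTop (𝓝 0) := by
  intro δ hδ
  classical
  have hq1 : F₀ (-δ) < 1 := hF₀lt δ hδ
  set r : ℝ := max (F₀ (-δ)) (Real.exp (-1)) with hrdef
  have hr0 : 0 < r := lt_max_of_lt_right (Real.exp_pos _)
  have hr1 : r < 1 := max_lt hq1 (Real.exp_lt_one_iff.mpr (by norm_num))
  have hqr : F₀ (-δ) ≤ r := le_max_left _ _
  set L : ℝ := -Real.log r with hLdef
  have hL : 0 < L := by
    have := Real.log_neg hr0 hr1
    rw [hLdef]; linarith
  set M : ℕ → ℕ := fun n => ⌈2 * Real.log n / L⌉₊ with hMdef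
  have hlogtop : Tendsto (fun n : ℕ => Real.log n) atTop atTop :=
    Real.tendsto_log_atTop.comp tendsto_natCast_atTop_atTop
  have hc : (0:ℝ) < min (1/2) (L/8) := lt_min (by norm_num) (by linarith)
  have main : ∀ᶠ n in atTop, ℙ {ω : Ω |
          ENNReal.ofReal δ < ⨆ t : Set.Icc (0 : ℝ) 1,
            ⨅ i : {i : ℕ // 1 ≤ i ∧ i ≤ n ∧ |x n i - (t : ℝ)| ≤ b n},
              ENNReal.ofReal |ε n (i : ℕ) ω|} ≤ ENNReal.ofReal ((n:ℝ)⁻¹) := by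
    filter_upwards [eventually_ge_atTop 1,
      hb0.eventually_lt_const (by norm_num : (0:ℝ) < 1),
      hblog.eventually_lt_const hc,
      hlogtop.eventually_ge_atTop 1,
      hlogtop.eventually_ge_atTop L] with n hn1 hb1 hsmall hlog1 hlogL
    have hbn := hbpos n
    obtain ⟨⟨i0, hi0, hieq⟩, hub⟩ := hΔ n
    have hΔpos : 0 < Δ n := by rw [hieq]; exact sub_pos.mpr (hxmono n i0 hi0)
    have hgap : ∀ i ≤ n, x n (i+1) - x n i ≤ Δ n := fun i hi => hub ⟨i, hi, rfl⟩
    have hlogpos : (0:ℝ) < Real.log n := by linarith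
    have hsm1 : Δ n * Real.log n / b n < 1/2 := lt_of_lt_of_le hsmall (min_le_left _ _)
    have hsm2 : Δ n * Real.log n / b n < L/8 := lt_of_lt_of_le hsmall (min_le_right _ _)
    have hΔlog1 : Δ n * Real.log n < 1/2 * b n := (div_lt_iff₀ hbn).mp hsm1
    have hΔlog2 : Δ n * Real.log n < L/8 * b n := (div_lt_iff₀ hbn).mp hsm2
    have hΔb : Δ n ≤ b n / 2 := by nlinarith
    have hMceil : (M n : ℝ) < 2 * Real.log n / L + 1 := Nat.ceil_lt_add_one (by positivity)
    have hMle : 2 * Real.log n / L ≤ (M n : ℝ) := Nat.le_ceil _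
    have hMb : ((M n : ℝ) + 1) * Δ n ≤ b n / 2 := by
      have h1 : (M n : ℝ) + 1 ≤ 4 * Real.log n / L := by
        have h2 : (2:ℝ) ≤ 2 * Real.log n / L := by
          rw [le_div_iff₀ hL]; nlinarith
        have : 2 * Real.log n / L + 2 ≤ 4 * Real.log n / L := by
          have : 4 * Real.log n / L = 2 * Real.log n / L + 2 * Real.log n / L := by ring
          linarith
        linarith
      have h2 : ((M n : ℝ) + 1) * Δ n ≤ (4 * Real.log n / L) * Δ n :=
        mul_le_mul_of_nonneg_right h1 hΔpos.le
      have h3 : (4 * Real.log n / L) * Δ n = (4 / L) * (Δ n * Real.log n) := by ring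
      have h4 : (4/L) * (Δ n * Real.log n) ≤ (4/L) * (L/8 * b n) :=
        mul_le_mul_of_nonneg_left hΔlog2.le (by positivity)
      have h5 : (4/L) * (L/8 * b n) = b n / 2 := by field_simp; ring
      linarith
    set Sj : ℕ → Finset ℕ :=
      fun j => (Finset.Icc 1 n).filter (fun i => |x n i - x n j| ≤ b n / 2) with hSjdef
    set E : ℕ → Set Ω := fun i => {ω | δ < |ε n i ω|} with hEdef
    set Ej : ℕ → Set Ω := fun j => ⋂ i ∈ Sj j, E i with hEjdef
    have stepA : {ω : Ω |
          ENNReal.ofReal δ < ⨆ t : Set.Icc (0 : ℝ) 1,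
            ⨅ i : {i : ℕ // 1 ≤ i ∧ i ≤ n ∧ |x n i - (t : ℝ)| ≤ b n},
              ENNReal.ofReal |ε n (i : ℕ) ω|} ⊆ ⋃ j ∈ Finset.Icc 1 n, Ej j := by
      intro ω hω
      simp only [Set.mem_setOf_eq] at hω
      obtain ⟨t, ht⟩ := lt_iSup_iff.mp hω
      obtain ⟨j, hj1, hjn, hjt⟩ := NE_nearby hn1 (hx0 n) (hx1 n) (hxmono n) hgap t.2.1 t.2.2
      refine Set.mem_biUnion (Finset.mem_Icc.mpr ⟨hj1, hjn⟩) ?_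
      simp only [hEjdef, Set.mem_iInter]
      intro i hi
      simp only [hSjdef, Finset.mem_filter, Finset.mem_Icc] at hi
      have hix : |x n i - (t:ℝ)| ≤ b n := by
        calc |x n i - (t:ℝ)| ≤ |x n i - x n j| + |x n j - (t:ℝ)| := abs_sub_le _ _ _
        _ ≤ b n / 2 + b n / 2 := add_le_add hi.2 (hjt.trans hΔb)
        _ = b n := by ring
      have hle := iInf_le (fun i : {i : ℕ // 1 ≤ i ∧ i ≤ n ∧ |x n i - (t:ℝ)| ≤ b n} =>
        ENNReal.ofReal |ε n (i:ℕ) ω|) ⟨i, hi.1.1, hi.1.2, hix⟩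
      have hlt := lt_of_lt_of_le ht hle
      simp only [hEdef, Set.mem_setOf_eq]
      by_contra hcon
      push_neg at hcon
      exact absurd hlt (not_lt.mpr (ENNReal.ofReal_le_ofReal hcon))
    have stepB : ∀ j ∈ Finset.Icc 1 n, M n ≤ (Sj j).card := by
      intro j hj
      rw [Finset.mem_Icc] at hj
      have hxlt := NE_xlt (hxmono n)
      have hxj0 : 0 < x n j := by
        have := hxlt j (by omega) 0 (by omega)
        rwa [hx0 n] at this
      have hxj1 : x n j < 1 := by
        have := hxlt (n+1) le_rfl j (by omega)
        rwa [hx1 n] at this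
      by_cases hcase : x n j + b n / 2 ≤ 1
      · have hcount := NE_count (hx0 n) (hx1 n) hgap hΔpos hxj0.le
          (by linarith : x n j + ((M n:ℝ)+1) * Δ n ≤ 1)
        refine le_trans hcount (Finset.card_le_card ?_)
        intro i hi
        simp only [Finset.mem_filter, Finset.mem_Icc] at hi
        simp only [hSjdef, Finset.mem_filter, Finset.mem_Icc]
        refine ⟨hi.1, ?_⟩
        rw [abs_le]
        constructor <;> linarith [hi.2.1, hi.2.2]
      · push_neg at hcase
        have hu0 : 0 ≤ x n j - ((M n:ℝ)+1) * Δ n := by linarith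
        have hcount := NE_count (hx0 n) (hx1 n) hgap hΔpos hu0
          (by linarith : (x n j - ((M n:ℝ)+1) * Δ n) + ((M n:ℝ)+1) * Δ n ≤ 1)
        refine le_trans hcount (Finset.card_le_card ?_)
        intro i hi
        simp only [Finset.mem_filter, Finset.mem_Icc] at hi
        simp only [hSjdef, Finset.mem_filter, Finset.mem_Icc]
        refine ⟨hi.1, ?_⟩
        rw [abs_le]
        constructor <;> linarith [hi.2.1, hi.2.2]
    have hmeasS : MeasurableSet {y : ℝ | δ < |y|} :=
      measurableSet_lt measurable_const measurable_id.abs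
    have stepC : ∀ j ∈ Finset.Icc 1 n, ℙ (Ej j) ≤ (ENNReal.ofReal r) ^ (M n) := by
      intro j hj
      set S' : Finset (Fin n) := Finset.univ.filter (fun k : Fin n => (k:ℕ)+1 ∈ Sj j) with hS'def
      have hseteq : Ej j = ⋂ k ∈ S', (ε n ((k:ℕ)+1)) ⁻¹' {y | δ < |y|} := by
        simp only [hEjdef]
        ext ω
        simp only [Set.mem_iInter, hS'def, Finset.mem_filter, Finset.mem_univ, true_and,
          Set.mem_preimage, Set.mem_setOf_eq, hEdef]
        constructor
        · intro h k hk
          exact h _ hk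
        · intro h i hi
          have hi' : 1 ≤ i ∧ i ≤ n := by
            have h2 := hi
            simp only [hSjdef, Finset.mem_filter, Finset.mem_Icc] at h2
            exact h2.1
          have hcoe : ((⟨i - 1, by omega⟩ : Fin n) : ℕ) + 1 = i := by simp; omega
          have hres := h ⟨i - 1, by omega⟩ (by rw [hcoe]; exact hi)
          rwa [hcoe] at hres
      have hprod : ℙ (⋂ k ∈ S', (ε n ((k:ℕ)+1)) ⁻¹' {y | δ < |y|})
          = ∏ k ∈ S', ℙ ((ε n ((k:ℕ)+1)) ⁻¹' {y | δ < |y|}) :=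
        (hεindep n).meas_biInter (fun k _ => ⟨{y | δ < |y|}, hmeasS, rfl⟩)
      have hcardeq : S'.card = (Sj j).card := by
        apply Finset.card_bij (fun (k : Fin n) _ => (k:ℕ)+1)
        · intro a ha
          simp only [hS'def, Finset.mem_filter, Finset.mem_univ, true_and] at ha
          exact ha
        · intro a ha b hb hab
          have : (a:ℕ) = (b:ℕ) := by omega
          exact Fin.ext this
        · intro i hi
          have hi' : 1 ≤ i ∧ i ≤ n := by
            have h2 := hi
            simp only [hSjdef, Finset.mem_filter, Finset.mem_Icc] at h2
            exact h2.1
          refine ⟨⟨i - 1, by omega⟩, ?_, by simp; omega⟩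
          simp only [hS'def, Finset.mem_filter, Finset.mem_univ, true_and]
          have hcoe : ((⟨i - 1, by omega⟩ : Fin n) : ℕ) + 1 = i := by simp; omega
          rw [hcoe]
          exact hi
      have hfac : ∀ k ∈ S', ℙ ((ε n ((k:ℕ)+1)) ⁻¹' {y | δ < |y|}) ≤ ENNReal.ofReal r := by
        intro k hk
        have hk1 : 1 ≤ (k:ℕ)+1 := by omega
        have hk2 : (k:ℕ)+1 ≤ n := by have := k.isLt; omega
        have h0 : (ℙ {ω | ε n ((k:ℕ)+1) ω ≤ 0}).toReal = 1 := by
          rw [hεcdf n _ hk1 hk2 0, hF₀zero]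
        have hqe : (ℙ {ω | ε n ((k:ℕ)+1) ω ≤ -δ}).toReal = F₀ (-δ) := hεcdf n _ hk1 hk2 (-δ)
        have hsb := NE_single (hεmeas n _) h0 hqe
        have hset : (ε n ((k:ℕ)+1)) ⁻¹' {y | δ < |y|} = {ω | δ < |ε n ((k:ℕ)+1) ω|} := rfl
        rw [hset]
        exact le_trans hsb (ENNReal.ofReal_le_ofReal hqr)
      have hM : M n ≤ S'.card := by rw [hcardeq]; exact stepB j hj
      have hr1' : ENNReal.ofReal r ≤ 1 := by
        rw [← ENNReal.ofReal_one]; exact ENNReal.ofReal_le_ofReal hr1.le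
      calc ℙ (Ej j) = ∏ k ∈ S', ℙ ((ε n ((k:ℕ)+1)) ⁻¹' {y | δ < |y|}) := by
            rw [hseteq, hprod]
      _ ≤ (ENNReal.ofReal r) ^ S'.card := Finset.prod_le_pow_card _ _ _ hfac
      _ = (ENNReal.ofReal r) ^ (M n) * (ENNReal.ofReal r) ^ (S'.card - M n) := by
            rw [← pow_add]; congr 1; omega
      _ ≤ (ENNReal.ofReal r) ^ (M n) * 1 := mul_le_mul_right (pow_le_one' hr1' _) _
      _ = (ENNReal.ofReal r) ^ (M n) := mul_one _
    calc ℙ {ω : Ω |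
          ENNReal.ofReal δ < ⨆ t : Set.Icc (0 : ℝ) 1,
            ⨅ i : {i : ℕ // 1 ≤ i ∧ i ≤ n ∧ |x n i - (t : ℝ)| ≤ b n},
              ENNReal.ofReal |ε n (i : ℕ) ω|}
        ≤ ℙ (⋃ j ∈ Finset.Icc 1 n, Ej j) := measure_mono stepA
    _ ≤ ∑ j ∈ Finset.Icc 1 n, ℙ (Ej j) := measure_biUnion_finset_le _ _
    _ ≤ ∑ _j ∈ Finset.Icc 1 n, (ENNReal.ofReal r) ^ (M n) := Finset.sum_le_sum stepC
    _ = (n : ℝ≥0∞) * (ENNReal.ofReal r) ^ (M n) := by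
        rw [Finset.sum_const, Nat.card_Icc]
        simp [nsmul_eq_mul]
    _ = ENNReal.ofReal ((n:ℝ) * r ^ (M n)) := by
        rw [ENNReal.ofReal_mul (by positivity), ← ENNReal.ofReal_pow hr0.le,
          ENNReal.ofReal_natCast]
    _ ≤ ENNReal.ofReal ((n:ℝ)⁻¹) := by
        apply ENNReal.ofReal_le_ofReal
        have hnR : (1:ℝ) ≤ (n:ℝ) := by exact_mod_cast hn1
        have hrM : r ^ (M n) ≤ ((n:ℝ)^2)⁻¹ := by
          have hlogr : Real.log r = -L := by rw [hLdef]; ring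
          have h1 : (M n : ℝ) * Real.log r ≤ -(2 * Real.log n) := by
            rw [hlogr]
            have h2 : 2 * Real.log n ≤ (M n : ℝ) * L := by
              rw [div_le_iff₀ hL] at hMle; linarith
            have h3 : (M n:ℝ) * -L = -((M n:ℝ) * L) := by ring
            linarith
          have hexp : ((n:ℝ)^2)⁻¹ = Real.exp (-(2 * Real.log n)) := by
            rw [Real.exp_neg]
            congr 1
            rw [two_mul, Real.exp_add, Real.exp_log (by linarith : (0:ℝ) < (n:ℝ))]
            ring
          calc r ^ (M n) = Real.exp (Real.log r) ^ (M n) := by rw [Real.exp_log hr0]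
          _ = Real.exp ((M n : ℝ) * Real.log r) := (Real.exp_nat_mul _ _).symm
          _ ≤ Real.exp (-(2 * Real.log n)) := Real.exp_le_exp.mpr h1
          _ = ((n:ℝ)^2)⁻¹ := hexp.symm
        have hnne : (n:ℝ) ≠ 0 := by linarith
        calc (n:ℝ) * r ^ (M n) ≤ (n:ℝ) * ((n:ℝ)^2)⁻¹ :=
          mul_le_mul_of_nonneg_left hrM (by positivity)
        _ = (n:ℝ)⁻¹ := by field_simp
  have hlim : Tendsto (fun n : ℕ => ENNReal.ofReal ((n:ℝ)⁻¹)) atTop (𝓝 0) := by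
    have h := ENNReal.tendsto_ofReal (tendsto_inv_atTop_nhds_zero_nat)
    simpa using h
  exact tendsto_of_tendsto_of_tendsto_of_le_of_le' tendsto_const_nhds hlim
    (Eventually.of_forall (fun n => zero_le)) main
end

section
/- Riemann-sum approximation under the design regularity condition: under assumption (A2''), for every bounded Riemann-integrable function φ : [0,1] → ℝ one has (1/n) Σ_{i=1}^n φ(x_{i,n}) → ∫₀¹ φ(x) f_X(x) dx as n → ∞. -/
open MeasureTheory Filter Topology

/-- In any finite chain of reals, a point in `Ioc (y 0) (y n)` lies in some
consecutive interval `Ioc (y i) (y (i+1))`. -/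
lemma aux_exists_Ioc (y : ℕ → ℝ) :
    ∀ n, ∀ t : ℝ, y 0 < t → t ≤ y n → ∃ i, i < n ∧ y i < t ∧ t ≤ y (i + 1) := by
  intro n
  induction n with
  | zero => intro t h1 h2; exact absurd (h1.trans_le h2) (lt_irrefl _)
  | succ n ih =>
    intro t h1 h2
    by_cases h : t ≤ y n
    · obtain ⟨i, hi, h3, h4⟩ := ih t h1 h
      exact ⟨i, Nat.lt_succ_of_lt hi, h3, h4⟩
    · exact ⟨n, Nat.lt_succ_self n, lt_of_not_ge h, h2⟩

/-- **Riemann-sum approximation under the design regularity condition (A2'').**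
For every bounded Riemann-integrable function `φ : [0,1] → ℝ` (encoded via Lebesgue's
criterion: bounded and almost everywhere continuous on `[0,1]`),
`(1/n) Σ_{i=1}^n φ(x_{i,n}) → ∫₀¹ φ(t) f_X(t) dt` as `n → ∞`. -/
theorem fixed_design_riemann_sum_approximation
    (x : ℕ → ℕ → ℝ) (fX : ℝ → ℝ)
    -- deterministic design points 0 = x_{0,n} < x_{1,n} < … < x_{n,n} < x_{n+1,n} = 1
    (hx0 : ∀ n, x n 0 = 0) (hx1 : ∀ n, x n (n + 1) = 1)
    (hmono : ∀ n, ∀ i ≤ n, x n i < x n (i + 1))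
    -- F_X is a cdf with continuous density f_X bounded away from zero on [0,1]
    (hfXcont : ContinuousOn fX (Set.Icc 0 1))
    (hfXpos : ∃ c > (0 : ℝ), ∀ t ∈ Set.Icc (0 : ℝ) 1, c ≤ fX t)
    (hfXone : (∫ t in (0 : ℝ)..1, fX t) = 1)
    -- (A2''):  max_{1 ≤ i ≤ n+1} |∫_{x_{i-1,n}}^{x_{i,n}} f_X − 1/n| = o(1/n)
    (hA2 : ∀ ε > (0 : ℝ), ∀ᶠ n : ℕ in atTop, ∀ i, 1 ≤ i → i ≤ n + 1 →
        |(∫ t in (x n (i - 1))..(x n i), fX t) - 1 / n| ≤ ε / n)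
    -- φ bounded and Riemann integrable on [0,1] (Lebesgue's criterion)
    (φ : ℝ → ℝ)
    (hφbdd : ∃ M : ℝ, ∀ t ∈ Set.Icc (0 : ℝ) 1, |φ t| ≤ M)
    (hφae : ∀ᵐ t ∂(volume.restrict (Set.Icc (0 : ℝ) 1)),
        ContinuousWithinAt φ (Set.Icc (0 : ℝ) 1) t)
    (hφmeas : AEStronglyMeasurable φ (volume.restrict (Set.Icc (0 : ℝ) 1))) :
    Tendsto (fun n : ℕ => (1 / n : ℝ) * ∑ i ∈ Finset.Icc 1 n, φ (x n i))
      atTop (𝓝 (∫ t in Set.Icc (0 : ℝ) 1, φ t * fX t)) := by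
  obtain ⟨M, hM⟩ := hφbdd
  obtain ⟨c, hc, hcle⟩ := hfXpos
  -- monotonicity of the design points
  have hmono' : ∀ n, ∀ i j, i ≤ j → j ≤ n + 1 → x n i ≤ x n j := by
    intro n i j hij hj
    induction j with
    | zero =>
      have h0 : i = 0 := Nat.le_zero.mp hij
      rw [h0]
    | succ j ih =>
      rcases Nat.eq_or_lt_of_le hij with h | h
      · rw [h]
      · have hij' : i ≤ j := Nat.lt_succ_iff.mp h
        have h1 := ih hij' (le_trans (Nat.le_succ j) hj)
        have h2 : x n j < x n (j + 1) := hmono n j (by omega)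
        linarith
  have hmem : ∀ n, ∀ i, i ≤ n + 1 → x n i ∈ Set.Icc (0 : ℝ) 1 := by
    intro n i hi
    constructor
    · have := hmono' n 0 i (Nat.zero_le i) hi
      rwa [hx0 n] at this
    · have := hmono' n i (n + 1) hi le_rfl
      rwa [hx1 n] at this
  -- uniform bound for φ on [0,1]
  set M' : ℝ := max M 0 with hM'def
  have hM'0 : (0 : ℝ) ≤ M' := le_max_right _ _
  have hM' : ∀ t ∈ Set.Icc (0 : ℝ) 1, |φ t| ≤ M' :=
    fun t ht => (hM t ht).trans (le_max_left _ _)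
  -- bound for fX on [0,1]
  obtain ⟨C, hC⟩ := isCompact_Icc.exists_bound_of_continuousOn hfXcont
  have hfXint : IntegrableOn fX (Set.Icc (0 : ℝ) 1) := hfXcont.integrableOn_Icc
  -- the step functions
  set ψ : ℕ → ℝ → ℝ := fun n t =>
    ∑ i ∈ Finset.Icc 1 n,
      (Set.Ioc (x n (i - 1)) (x n i)).indicator (fun _ => φ (x n i)) t with hψdef
  have hψ_eval : ∀ n, ∀ i0, 1 ≤ i0 → i0 ≤ n →
      ∀ t ∈ Set.Ioc (x n (i0 - 1)) (x n i0), ψ n t = φ (x n i0) := by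
    intro n i0 h1 h2 t ht
    simp only [hψdef]
    rw [Finset.sum_eq_single_of_mem i0 (Finset.mem_Icc.mpr ⟨h1, h2⟩)]
    · exact Set.indicator_of_mem ht (fun _ => φ (x n i0))
    · intro j hj hne
      rw [Finset.mem_Icc] at hj
      apply Set.indicator_of_notMem
      rcases lt_or_gt_of_ne hne with hlt | hgt
      · -- j < i0 : x n j ≤ x n (i0 - 1) < t
        have := hmono' n j (i0 - 1) (by omega) (by omega)
        intro hmem'
        exact absurd hmem'.2 (not_le.mpr (lt_of_le_of_lt this ht.1))
      · -- i0 < j : t ≤ x n i0 ≤ x n (j - 1)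
        have := hmono' n i0 (j - 1) (by omega) (by omega)
        intro hmem'
        exact absurd hmem'.1 (not_lt.mpr (ht.2.trans this))
  have hψ_zero : ∀ n, ∀ t : ℝ, t ∉ Set.Ioc (0 : ℝ) (x n n) → ψ n t = 0 := by
    intro n t ht
    simp only [hψdef]
    apply Finset.sum_eq_zero
    intro i hi
    rw [Finset.mem_Icc] at hi
    apply Set.indicator_of_notMem
    intro hmem'
    apply ht
    have h1 : (0 : ℝ) ≤ x n (i - 1) := by
      have := hmono' n 0 (i - 1) (Nat.zero_le _) (by omega); rwa [hx0 n] at this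
    have h2 : x n i ≤ x n n := hmono' n i n hi.2 (by omega)
    exact ⟨lt_of_le_of_lt h1 hmem'.1, hmem'.2.trans h2⟩
  have hψ_bound : ∀ n, ∀ t : ℝ, |ψ n t| ≤ M' := by
    intro n t
    by_cases h : t ∈ Set.Ioc (0 : ℝ) (x n n)
    · obtain ⟨i, hi, hlt, hle⟩ := aux_exists_Ioc (x n) n t (by rw [hx0 n] at *; exact h.1) h.2
      have heq : ψ n t = φ (x n (i + 1)) := by
        apply hψ_eval n (i + 1) (by omega) (by omega)
        simpa using ⟨hlt, hle⟩
      rw [heq]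
      exact hM' _ (hmem n (i + 1) (by omega))
    · rw [hψ_zero n t h]; simpa using hM'0
  have hψmeas : ∀ n, Measurable (ψ n) := by
    intro n
    exact Finset.measurable_sum _ fun i _ => measurable_const.indicator measurableSet_Ioc
  -- spacings between consecutive design points
  have hle_cons : ∀ n, ∀ i, 1 ≤ i → i ≤ n + 1 → x n (i - 1) ≤ x n i := by
    intro n i h1 h2
    have heq : (i - 1) + 1 = i := by omega
    have := hmono n (i - 1) (by omega)
    rw [heq] at this
    exact this.le
  -- interval integrals of fX over the subintervals
  have hintfX : ∀ n, ∀ i, 1 ≤ i → i ≤ n + 1 →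
      IntervalIntegrable fX volume (x n (i - 1)) (x n i) := by
    intro n i h1 h2
    apply MeasureTheory.IntegrableOn.intervalIntegrable
    apply hfXint.mono_set
    rw [Set.uIcc_of_le (hle_cons n i h1 h2)]
    exact Set.Icc_subset_Icc (hmem n (i - 1) (by omega)).1 (hmem n i h2).2
  -- lower bound the masses by c times the lengths
  have hlow : ∀ n, ∀ i, 1 ≤ i → i ≤ n + 1 →
      c * (x n i - x n (i - 1)) ≤ ∫ t in (x n (i - 1))..(x n i), fX t := by
    intro n i h1 h2
    have hle := hle_cons n i h1 h2
    have := intervalIntegral.integral_mono_on (f := fun _ => c) (g := fX) hle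
      intervalIntegrable_const (hintfX n i h1 h2)
      (fun u hu => hcle u
        (Set.Icc_subset_Icc (hmem n (i - 1) (by omega)).1 (hmem n i h2).2 hu))
    simpa [intervalIntegral.integral_const, smul_eq_mul, mul_comm] using this
  -- spacing estimate eventually
  have hspace : ∀ᶠ n : ℕ in atTop, ∀ i, 1 ≤ i → i ≤ n + 1 →
      x n i - x n (i - 1) ≤ 2 / (c * n) := by
    filter_upwards [hA2 1 one_pos, eventually_gt_atTop 0] with n hn hn0
    intro i h1 h2
    have hm := abs_le.mp (hn i h1 h2)
    have hup : (∫ t in (x n (i - 1))..(x n i), fX t) ≤ 2 / (n : ℝ) := by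
      have : (1 : ℝ) / n + 1 / n = 2 / n := by ring
      linarith [hm.2]
    have h3 : c * (x n i - x n (i - 1)) ≤ 2 / (n : ℝ) := (hlow n i h1 h2).trans hup
    have : x n i - x n (i - 1) ≤ (2 / (n : ℝ)) / c := (le_div_iff₀' hc).mpr h3
    calc x n i - x n (i - 1) ≤ (2 / (n : ℝ)) / c := this
      _ = 2 / (c * n) := by ring
  -- 2/(c n) → 0
  have htendszero : Tendsto (fun n : ℕ => 2 / (c * (n : ℝ))) atTop (𝓝 0) := by
    have h1 : Tendsto (fun n : ℕ => ((n : ℝ))⁻¹) atTop (𝓝 0) :=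
      tendsto_inv_atTop_zero.comp tendsto_natCast_atTop_atTop
    have h2 := h1.const_mul (2 / c)
    rw [mul_zero] at h2
    convert h2 using 2 with n
    ring
  -- pointwise convergence of the step functions
  have hpt : ∀ t ∈ Set.Ioo (0 : ℝ) 1, ContinuousWithinAt φ (Set.Icc 0 1) t →
      Tendsto (fun n => ψ n t) atTop (𝓝 (φ t)) := by
    intro t ht hcont
    rw [Metric.tendsto_atTop]
    intro ε hε
    obtain ⟨η, hη, hηprop⟩ := Metric.continuousWithinAt_iff.mp hcont ε hε
    have hminpos : (0 : ℝ) < min η (1 - t) := lt_min hη (by linarith [ht.2])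
    have hev : ∀ᶠ n : ℕ in atTop,
        (∀ i, 1 ≤ i → i ≤ n + 1 → x n i - x n (i - 1) ≤ 2 / (c * n)) ∧
        2 / (c * (n : ℝ)) < min η (1 - t) := by
      exact hspace.and (htendszero.eventually (gt_mem_nhds hminpos))
    obtain ⟨N, hN⟩ := eventually_atTop.mp hev
    refine ⟨N, fun n hn => ?_⟩
    obtain ⟨hsp, hlt⟩ := hN n hn
    have hgap : 1 - x n n ≤ 2 / (c * n) := by
      have := hsp (n + 1) (by omega) le_rfl
      simpa [hx1 n] using this
    have htle : t ≤ x n n := by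
      have h2 : 2 / (c * (n : ℝ)) < 1 - t := hlt.trans_le (min_le_right _ _)
      linarith
    obtain ⟨i, hi, hlt1, hle1⟩ :=
      aux_exists_Ioc (x n) n t (by rw [hx0 n]; exact ht.1) htle
    have heval : ψ n t = φ (x n (i + 1)) := by
      apply hψ_eval n (i + 1) (by omega) (by omega)
      simpa using ⟨hlt1, hle1⟩
    rw [heval]
    apply hηprop (hmem n (i + 1) (by omega))
    rw [Real.dist_eq, abs_of_nonneg (by linarith)]
    have hsp' := hsp (i + 1) (by omega) (by omega)
    simp only [Nat.add_sub_cancel] at hsp'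
    have : x n (i + 1) - t ≤ 2 / (c * n) := by linarith
    exact this.trans_lt (hlt.trans_le (min_le_left _ _))
  -- the integral identity for the step functions
  have hIocsub : ∀ n, ∀ i, 1 ≤ i → i ≤ n + 1 →
      Set.Ioc (x n (i - 1)) (x n i) ⊆ Set.Icc (0 : ℝ) 1 := by
    intro n i h1 h2 u hu
    have ha := (hmem n (i - 1) (by omega)).1
    have hb := (hmem n i h2).2
    exact ⟨le_of_lt (lt_of_le_of_lt ha hu.1), hu.2.trans hb⟩
  have hint_eq : ∀ n, (∫ t in Set.Icc (0 : ℝ) 1, ψ n t * fX t) =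
      ∑ i ∈ Finset.Icc 1 n, φ (x n i) * ∫ t in Set.Ioc (x n (i - 1)) (x n i), fX t := by
    intro n
    have h1 : ∀ t : ℝ, ψ n t * fX t = ∑ i ∈ Finset.Icc 1 n,
        (Set.Ioc (x n (i - 1)) (x n i)).indicator (fun u => φ (x n i) * fX u) t := by
      intro t
      simp only [hψdef]
      rw [Finset.sum_mul]
      refine Finset.sum_congr rfl fun i _ => ?_
      by_cases h : t ∈ Set.Ioc (x n (i - 1)) (x n i)
      · rw [Set.indicator_of_mem h, Set.indicator_of_mem h]
      · rw [Set.indicator_of_notMem h, Set.indicator_of_notMem h, zero_mul]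
    simp only [h1]
    rw [MeasureTheory.integral_finset_sum]
    · refine Finset.sum_congr rfl fun i hi => ?_
      rw [Finset.mem_Icc] at hi
      rw [setIntegral_indicator measurableSet_Ioc,
        Set.inter_eq_self_of_subset_right (hIocsub n i hi.1 (by omega)),
        integral_const_mul]
    · intro i hi
      rw [Finset.mem_Icc] at hi
      exact (hfXint.const_mul _).indicator measurableSet_Ioc
  -- Step A: dominated convergence
  have hS : Tendsto (fun n : ℕ => ∑ i ∈ Finset.Icc 1 n,
        φ (x n i) * ∫ t in Set.Ioc (x n (i - 1)) (x n i), fX t) atTop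
      (𝓝 (∫ t in Set.Icc (0 : ℝ) 1, φ t * fX t)) := by
    have h01 : ∀ᵐ t ∂(volume.restrict (Set.Icc (0 : ℝ) 1)), t ∈ Set.Ioo (0 : ℝ) 1 := by
      rw [MeasureTheory.ae_restrict_iff' measurableSet_Icc]
      rw [MeasureTheory.ae_iff]
      apply measure_mono_null ?_
        (((Set.finite_singleton (1 : ℝ)).insert 0).measure_zero volume)
      intro t htmem
      simp only [Set.mem_setOf_eq, not_forall, Classical.not_imp, Set.mem_Icc, Set.mem_Ioo] at htmem
      obtain ⟨⟨h1, h2⟩, h3⟩ := htmem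
      rcases eq_or_lt_of_le h1 with he | hlt
      · left; exact he.symm
      rcases eq_or_lt_of_le h2 with he | hlt2
      · right; exact he
      exact absurd ⟨hlt, hlt2⟩ h3
    have hdct := MeasureTheory.tendsto_integral_of_dominated_convergence
      (μ := volume.restrict (Set.Icc (0 : ℝ) 1))
      (F := fun n t => ψ n t * fX t) (f := fun t => φ t * fX t)
      (bound := fun _ => M' * C)
      (fun n => ((hψmeas n).aestronglyMeasurable).mul
        (hfXcont.aestronglyMeasurable measurableSet_Icc))
      (integrable_const _)
      (by
        intro n
        filter_upwards [MeasureTheory.self_mem_ae_restrict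
          (measurableSet_Icc : MeasurableSet (Set.Icc (0 : ℝ) 1))] with t htI
        rw [Real.norm_eq_abs, abs_mul]
        exact mul_le_mul (hψ_bound n t) ((Real.norm_eq_abs (fX t)) ▸ hC t htI)
          (abs_nonneg _) hM'0)
      (by
        filter_upwards [hφae, h01] with t hcont ht01
        exact (hpt t ht01 hcont).mul_const (fX t))
    simpa only [hint_eq] using hdct
  -- Step B: difference between the Riemann sum and the Stieltjes sum
  have hdiff : Tendsto (fun n : ℕ =>
      (1 / n : ℝ) * ∑ i ∈ Finset.Icc 1 n, φ (x n i) -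
      ∑ i ∈ Finset.Icc 1 n, φ (x n i) * ∫ t in Set.Ioc (x n (i - 1)) (x n i), fX t)
      atTop (𝓝 0) := by
    rw [NormedAddCommGroup.tendsto_nhds_zero]
    intro ε hε
    have hεM : 0 < ε / (M' + 1) := by positivity
    filter_upwards [hA2 (ε / (M' + 1)) hεM, eventually_ge_atTop 1] with n hn hn1
    have hncast : (0 : ℝ) < (n : ℝ) := by exact_mod_cast Nat.lt_of_lt_of_le Nat.zero_lt_one hn1
    have hrw : (1 / n : ℝ) * ∑ i ∈ Finset.Icc 1 n, φ (x n i) -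
        ∑ i ∈ Finset.Icc 1 n, φ (x n i) * ∫ t in Set.Ioc (x n (i - 1)) (x n i), fX t =
        ∑ i ∈ Finset.Icc 1 n, φ (x n i) *
          ((1 / n : ℝ) - ∫ t in Set.Ioc (x n (i - 1)) (x n i), fX t) := by
      rw [Finset.mul_sum, ← Finset.sum_sub_distrib]
      exact Finset.sum_congr rfl fun i _ => by ring
    rw [hrw, Real.norm_eq_abs]
    have hbnd : ∀ i ∈ Finset.Icc 1 n,
        |φ (x n i) * ((1 / n : ℝ) - ∫ t in Set.Ioc (x n (i - 1)) (x n i), fX t)| ≤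
        M' * (ε / (M' + 1) / n) := by
      intro i hi
      rw [Finset.mem_Icc] at hi
      rw [abs_mul]
      have h1 : |φ (x n i)| ≤ M' := hM' _ (hmem n i (by omega))
      have h2 : |(1 / n : ℝ) - ∫ t in Set.Ioc (x n (i - 1)) (x n i), fX t| ≤
          ε / (M' + 1) / n := by
        rw [← intervalIntegral.integral_of_le (hle_cons n i hi.1 (by omega)), abs_sub_comm]
        exact hn i hi.1 (by omega)
      exact mul_le_mul h1 h2 (abs_nonneg _) hM'0
    calc |∑ i ∈ Finset.Icc 1 n, φ (x n i) *
            ((1 / n : ℝ) - ∫ t in Set.Ioc (x n (i - 1)) (x n i), fX t)|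
        ≤ ∑ i ∈ Finset.Icc 1 n, |φ (x n i) *
            ((1 / n : ℝ) - ∫ t in Set.Ioc (x n (i - 1)) (x n i), fX t)| :=
          Finset.abs_sum_le_sum_abs _ _
      _ ≤ ∑ _i ∈ Finset.Icc 1 n, M' * (ε / (M' + 1) / n) := Finset.sum_le_sum hbnd
      _ = (n : ℝ) * (M' * (ε / (M' + 1) / n)) := by
          rw [Finset.sum_const, Nat.card_Icc]
          simp [nsmul_eq_mul]
      _ = M' * (ε / (M' + 1)) := by field_simp
      _ < ε := by
          rw [mul_div_assoc'] at *
          rw [div_lt_iff₀ (by positivity : (0 : ℝ) < M' + 1)]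
          nlinarith
  -- combine
  have := hdiff.add hS
  rw [zero_add] at this
  simpa only [sub_add_cancel] using this
end
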